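/- arXiv:math/0507060 — 5 statements merged into one kernel-verified Lean document; each statement's English description precedes it below -/
import Mathlib

section
/- Let H = H♭ ⊕ H♯ be an orthogonal decomposition of a Hilbert space with projector P♭ onto H♭, and let H₋ be a closed subspace. Then the pair (H♯, H₋) is Fredholm if and only if the restriction P♭|_{H₋} : H₋ → H♭ is a Fredholm operator, and in that case Ind(H♯, H₋) = ind(P♭|_{H₋}). -/
open Submodule Module

/-- A bounded operator between normed spaces is Fredholm: finite-dimensional kernel,
closed range of finite codimension. -/
def IsFredholmOp {E F : Type*} [NormedAddCommGroup E] [NormedSpace ℂ E]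
    [NormedAddCommGroup F] [NormedSpace ℂ F] (T : E →L[ℂ] F) : Prop :=
  FiniteDimensional ℂ (LinearMap.ker (T : E →ₗ[ℂ] F)) ∧ IsClosed (LinearMap.range (T : E →ₗ[ℂ] F) : Set F) ∧
    FiniteDimensional ℂ (F ⧸ LinearMap.range (T : E →ₗ[ℂ] F))

/-- The index of an operator: dim ker − dim coker. -/
noncomputable def opIndex {E F : Type*} [NormedAddCommGroup E] [NormedSpace ℂ E]
    [NormedAddCommGroup F] [NormedSpace ℂ F] (T : E →L[ℂ] F) : ℤ :=
  (finrank ℂ (LinearMap.ker (T : E →ₗ[ℂ] F)) : ℤ) - finrank ℂ (F ⧸ LinearMap.range (T : E →ₗ[ℂ] F))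

/-- A pair of subspaces is Fredholm: finite-dimensional intersection and
closed sum of finite codimension. -/
def IsFredholmPair {H : Type*} [NormedAddCommGroup H] [NormedSpace ℂ H]
    (A B : Submodule ℂ H) : Prop :=
  FiniteDimensional ℂ ↥(A ⊓ B) ∧ IsClosed ((A ⊔ B : Submodule ℂ H) : Set H) ∧
    FiniteDimensional ℂ (H ⧸ (A ⊔ B))

/-- Index of a Fredholm pair: dim(A ∩ B) − codim(A + B). -/
noncomputable def pairIndex {H : Type*} [NormedAddCommGroup H] [NormedSpace ℂ H]
    (A B : Submodule ℂ H) : ℤ :=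
  (finrank ℂ ↥(A ⊓ B) : ℤ) - finrank ℂ (H ⧸ (A ⊔ B))

/-- for a splitting given by a bounded projector P♭ (with H♭ = range P♭,
H♯ = ker P♭), the pair (H♯, H₋) is Fredholm iff P♭|_{H₋} : H₋ → H♭ is Fredholm,
with equal indices. -/
theorem stmt1 {H : Type*} [NormedAddCommGroup H] [InnerProductSpace ℂ H] [CompleteSpace H]
    (Pb : H →L[ℂ] H) (hPb : Pb ∘L Pb = Pb)
    (Hm : Submodule ℂ H) (hHm : IsClosed (Hm : Set H))
    (restr : ↥Hm →L[ℂ] ↥(LinearMap.range (Pb : H →ₗ[ℂ] H)))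
    (hrestr : restr = (Pb.comp Hm.subtypeL).codRestrict (LinearMap.range (Pb : H →ₗ[ℂ] H))
      (fun x => LinearMap.mem_range_self _ _)) :
    (IsFredholmPair (LinearMap.ker (Pb : H →ₗ[ℂ] H)) Hm ↔ IsFredholmOp restr) ∧
      (IsFredholmPair (LinearMap.ker (Pb : H →ₗ[ℂ] H)) Hm →
        pairIndex (LinearMap.ker (Pb : H →ₗ[ℂ] H)) Hm = opIndex restr) := by
  subst hrestr
  have hidem : ∀ y, Pb (Pb y) = Pb y := fun y => DFunLike.congr_fun hPb y
  set T := (Pb.comp Hm.subtypeL).codRestrict (LinearMap.range (Pb : H →ₗ[ℂ] H))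
      (fun x => LinearMap.mem_range_self _ _) with hT
  have hTval : ∀ x : Hm, (T x : H) = Pb x := fun x => rfl
  -- range of Pb is closed
  have hRclosed : IsClosed ((LinearMap.range (Pb : H →ₗ[ℂ] H) : Submodule ℂ H) : Set H) := by
    have : LinearMap.range (Pb : H →ₗ[ℂ] H) = LinearMap.ker ((ContinuousLinearMap.id ℂ H - Pb : H →L[ℂ] H) : H →ₗ[ℂ] H) := by
      ext x
      simp only [LinearMap.mem_range, LinearMap.mem_ker, ContinuousLinearMap.coe_coe, ContinuousLinearMap.coe_sub',
        Pi.sub_apply, ContinuousLinearMap.coe_id', id_eq, sub_eq_zero]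
      exact ⟨fun ⟨y, hy⟩ => by rw [← hy]; exact (hidem y).symm, fun h => ⟨x, h.symm⟩⟩
    rw [this]; exact ContinuousLinearMap.isClosed_ker _
  -- kernel identification
  have hker : LinearMap.ker (T : ↥Hm →ₗ[ℂ] ↥(LinearMap.range (Pb : H →ₗ[ℂ] H))) = (LinearMap.ker (Pb : H →ₗ[ℂ] H) ⊓ Hm).comap Hm.subtype := by
    have hk : LinearMap.ker (T : ↥Hm →ₗ[ℂ] ↥(LinearMap.range (Pb : H →ₗ[ℂ] H)))
        = LinearMap.ker ((Pb.comp Hm.subtypeL : ↥Hm →L[ℂ] H) : ↥Hm →ₗ[ℂ] H) := by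
      ext x
      simp only [LinearMap.mem_ker, ContinuousLinearMap.coe_coe]
      rw [Subtype.ext_iff, hTval]
      rfl
    rw [hk]
    ext x
    simp only [ContinuousLinearMap.coe_comp',
      Function.comp_apply, Submodule.coe_subtypeL', Submodule.coe_subtype,
      Submodule.mem_comap, Submodule.mem_inf, LinearMap.mem_ker,
      ContinuousLinearMap.coe_coe]
    exact ⟨fun h => ⟨h, x.2⟩, fun h => h.1⟩
  have e1 : ↥(LinearMap.ker (T : ↥Hm →ₗ[ℂ] ↥(LinearMap.range (Pb : H →ₗ[ℂ] H)))) ≃ₗ[ℂ] ↥(LinearMap.ker (Pb : H →ₗ[ℂ] H) ⊓ Hm) :=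
    (LinearEquiv.ofEq _ _ hker) ≪≫ₗ Submodule.comapSubtypeEquivOfLe inf_le_right
  -- image of range T in H
  have hrangeimg : (LinearMap.range (T : ↥Hm →ₗ[ℂ] ↥(LinearMap.range (Pb : H →ₗ[ℂ] H)))).map (LinearMap.range (Pb : H →ₗ[ℂ] H)).subtype
      = Hm.map (Pb : H →ₗ[ℂ] H) := by
    ext y
    simp only [Submodule.mem_map, LinearMap.mem_range, Submodule.coe_subtype]
    constructor
    · rintro ⟨z, ⟨m, rfl⟩, rfl⟩
      exact ⟨m, m.2, (hTval m).symm⟩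
    · rintro ⟨m, hm, rfl⟩
      exact ⟨_, ⟨⟨m, hm⟩, rfl⟩, hTval _⟩
  -- membership in the sum
  have hsup : LinearMap.ker (Pb : H →ₗ[ℂ] H) ⊔ Hm
      = (Hm.map (Pb : H →ₗ[ℂ] H)).comap (Pb : H →ₗ[ℂ] H) := by
    rw [Submodule.comap_map_eq, sup_comm]
  have hmem : ∀ x : H, x ∈ LinearMap.ker (Pb : H →ₗ[ℂ] H) ⊔ Hm ↔ ∃ m ∈ Hm, Pb m = Pb x := by
    intro x
    rw [hsup]
    simp [Submodule.mem_comap, Submodule.mem_map]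
  -- the quotient map φ
  set φ : H →ₗ[ℂ] (↥(LinearMap.range (Pb : H →ₗ[ℂ] H)) ⧸ LinearMap.range (T : ↥Hm →ₗ[ℂ] ↥(LinearMap.range (Pb : H →ₗ[ℂ] H)))) :=
    (LinearMap.range (T : ↥Hm →ₗ[ℂ] ↥(LinearMap.range (Pb : H →ₗ[ℂ] H)))).mkQ ∘ₗ
      LinearMap.codRestrict (LinearMap.range (Pb : H →ₗ[ℂ] H)) (Pb : H →ₗ[ℂ] H)
        (fun x => LinearMap.mem_range_self (Pb : H →ₗ[ℂ] H) x) with hφ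
  have hφval : ∀ x : H, φ x = Submodule.Quotient.mk
      (⟨Pb x, LinearMap.mem_range_self (Pb : H →ₗ[ℂ] H) x⟩ : ↥(LinearMap.range (Pb : H →ₗ[ℂ] H))) := fun x => rfl
  have hφsurj : Function.Surjective φ := by
    intro q
    obtain ⟨y, rfl⟩ := Submodule.mkQ_surjective _ q
    obtain ⟨z, hz⟩ := y.2
    exact ⟨z, by rw [hφval]; exact congrArg _ (Subtype.ext hz)⟩
  have hkerφ : LinearMap.ker φ = LinearMap.ker (Pb : H →ₗ[ℂ] H) ⊔ Hm := by
    ext x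
    rw [LinearMap.mem_ker, hmem, hφval, Submodule.Quotient.mk_eq_zero,
      LinearMap.mem_range]
    constructor
    · rintro ⟨m, hm⟩
      exact ⟨m, m.2, by simpa [Subtype.ext_iff, hTval] using hm⟩
    · rintro ⟨m, hm, hmx⟩
      exact ⟨⟨m, hm⟩, Subtype.ext (by simpa [hTval] using hmx)⟩
  have e2 : (H ⧸ (LinearMap.ker (Pb : H →ₗ[ℂ] H) ⊔ Hm)) ≃ₗ[ℂ]
      (↥(LinearMap.range (Pb : H →ₗ[ℂ] H)) ⧸ LinearMap.range (T : ↥Hm →ₗ[ℂ] ↥(LinearMap.range (Pb : H →ₗ[ℂ] H)))) :=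
    (Submodule.quotEquivOfEq _ _ hkerφ.symm) ≪≫ₗ φ.quotKerEquivOfSurjective hφsurj
  -- closedness equivalence
  have hsetinter : ((Hm.map (Pb : H →ₗ[ℂ] H) : Submodule ℂ H) : Set H)
      = (((LinearMap.ker (Pb : H →ₗ[ℂ] H) ⊔ Hm : Submodule ℂ H)) : Set H)
        ∩ ((LinearMap.range (Pb : H →ₗ[ℂ] H) : Submodule ℂ H) : Set H) := by
    ext y
    simp only [Set.mem_inter_iff, SetLike.mem_coe, Submodule.mem_map, LinearMap.mem_range]
    constructor
    · rintro ⟨m, hm, rfl⟩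
      exact ⟨(hmem _).2 ⟨m, hm, (hidem m).symm⟩, m, rfl⟩
    · rintro ⟨hy, z, rfl⟩
      obtain ⟨m, hm, hmx⟩ := (hmem _).1 hy
      exact ⟨m, hm, show Pb m = Pb z from hmx.trans (hidem z)⟩
  have himgset : Subtype.val '' ((LinearMap.range (T : ↥Hm →ₗ[ℂ] ↥(LinearMap.range (Pb : H →ₗ[ℂ] H))) : Submodule ℂ ↥(LinearMap.range (Pb : H →ₗ[ℂ] H)))
        : Set ↥(LinearMap.range (Pb : H →ₗ[ℂ] H)))
      = ((Hm.map (Pb : H →ₗ[ℂ] H) : Submodule ℂ H) : Set H) := by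
    rw [← hrangeimg]
    rfl
  have hsupset : ((LinearMap.ker (Pb : H →ₗ[ℂ] H) ⊔ Hm : Submodule ℂ H) : Set H)
      = ⇑Pb ⁻¹' ((Hm.map (Pb : H →ₗ[ℂ] H) : Submodule ℂ H) : Set H) := by
    rw [hsup]; rfl
  have hclosed_iff : IsClosed (((LinearMap.ker (Pb : H →ₗ[ℂ] H) ⊔ Hm : Submodule ℂ H)) : Set H)
      ↔ IsClosed ((LinearMap.range (T : ↥Hm →ₗ[ℂ] ↥(LinearMap.range (Pb : H →ₗ[ℂ] H))) : Submodule ℂ ↥(LinearMap.range (Pb : H →ₗ[ℂ] H)))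
        : Set ↥(LinearMap.range (Pb : H →ₗ[ℂ] H))) := by
    constructor
    · intro h
      have hmapclosed : IsClosed ((Hm.map (Pb : H →ₗ[ℂ] H) : Submodule ℂ H) : Set H) := by
        rw [hsetinter]; exact h.inter hRclosed
      have hpre : ((LinearMap.range (T : ↥Hm →ₗ[ℂ] ↥(LinearMap.range (Pb : H →ₗ[ℂ] H))) : Submodule ℂ ↥(LinearMap.range (Pb : H →ₗ[ℂ] H)))
            : Set ↥(LinearMap.range (Pb : H →ₗ[ℂ] H)))
          = Subtype.val ⁻¹' ((Hm.map (Pb : H →ₗ[ℂ] H) : Submodule ℂ H) : Set H) := by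
        ext x
        simp only [Set.mem_preimage, SetLike.mem_coe, LinearMap.mem_range, Submodule.mem_map]
        constructor
        · rintro ⟨m, rfl⟩
          exact ⟨m, m.2, (hTval m).symm⟩
        · rintro ⟨m, hm, hmx⟩
          exact ⟨⟨m, hm⟩, Subtype.ext (by rw [ContinuousLinearMap.coe_coe, hTval]; exact hmx)⟩
      rw [hpre]
      exact hmapclosed.preimage continuous_subtype_val
    · intro h
      have himg : IsClosed (Subtype.val ''
          ((LinearMap.range (T : ↥Hm →ₗ[ℂ] ↥(LinearMap.range (Pb : H →ₗ[ℂ] H))) : Submodule ℂ ↥(LinearMap.range (Pb : H →ₗ[ℂ] H)))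
            : Set ↥(LinearMap.range (Pb : H →ₗ[ℂ] H)))) :=
        hRclosed.isClosedEmbedding_subtypeVal.isClosed_iff_image_isClosed.mp h
      rw [himgset] at himg
      rw [hsupset]
      exact himg.preimage Pb.continuous
  -- assemble
  have hfin1 : FiniteDimensional ℂ ↥(LinearMap.ker (Pb : H →ₗ[ℂ] H) ⊓ Hm)
      ↔ FiniteDimensional ℂ ↥(LinearMap.ker (T : ↥Hm →ₗ[ℂ] ↥(LinearMap.range (Pb : H →ₗ[ℂ] H)))) :=
    ⟨fun h => e1.symm.finiteDimensional, fun h => e1.finiteDimensional⟩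
  have hfin2 : FiniteDimensional ℂ (H ⧸ (LinearMap.ker (Pb : H →ₗ[ℂ] H) ⊔ Hm))
      ↔ FiniteDimensional ℂ (↥(LinearMap.range (Pb : H →ₗ[ℂ] H)) ⧸ LinearMap.range (T : ↥Hm →ₗ[ℂ] ↥(LinearMap.range (Pb : H →ₗ[ℂ] H)))) :=
    ⟨fun h => e2.finiteDimensional, fun h => e2.symm.finiteDimensional⟩
  constructor
  · unfold IsFredholmPair IsFredholmOp
    rw [hfin1, hfin2, hclosed_iff]
  · intro _
    unfold pairIndex opIndex
    rw [e1.symm.finrank_eq, e2.finrank_eq]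
end

section
/- Let H = H♭ ⊕ H♯ with projectors P♭, P♯, and let φ be an invertible bounded operator on H such that φP♭ − P♭φ is compact. Then the operator φP♭ + P♯ is Fredholm, and the pair (H♯, φ(H♭)) is a Fredholm pair with Ind(H♯, φ(H♭)) = ind(φP♭ + P♯). -/
open Submodule Module

section AuxFredholm

open ContinuousLinearMap

set_option linter.unusedSectionVars false

variable {H : Type*} [NormedAddCommGroup H] [InnerProductSpace ℂ H] [CompleteSpace H]

/-- If `S ∘ T = 1 + compact`, then `ker T` is finite dimensional. -/
theorem aux_ker_fd' (T S : H →L[ℂ] H) (hK : IsCompactOperator ⇑(S ∘L T - 1)) :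
    FiniteDimensional ℂ (LinearMap.ker (T : H →ₗ[ℂ] H)) := by
  set K : H →L[ℂ] H := S ∘L T - 1 with hKdef
  have key : ∀ x ∈ LinearMap.ker (T : H →ₗ[ℂ] H), x = -(K x) := by
    intro x hx
    have hx' : T x = 0 := hx
    simp [hKdef, hx']
  obtain ⟨M, hMc, hMsub⟩ := hK.image_subset_compact_of_bounded
    (S := Metric.closedBall (0 : H) 1) Metric.isBounded_closedBall
  set C : Set H := ((LinearMap.ker (T : H →ₗ[ℂ] H) : Submodule ℂ H) : Set H) ∩ Metric.closedBall (0:H) 1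
    with hCdef
  have hCclosed : IsClosed C := (ContinuousLinearMap.isClosed_ker T).inter Metric.isClosed_closedBall
  have hCsub : C ⊆ -M := by
    rintro x ⟨hx1, hx2⟩
    have : K x ∈ M := hMsub ⟨x, hx2, rfl⟩
    rw [Set.mem_neg]
    have h2 : -x = K x := by conv_lhs => rw [key x hx1, neg_neg]
    rw [h2]
    exact this
  have hCcomp : IsCompact C := IsCompact.of_isClosed_subset hMc.neg hCclosed hCsub
  -- transfer to the subtype
  have hball : IsCompact (Metric.closedBall (0 : LinearMap.ker (T : H →ₗ[ℂ] H)) 1) := by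
    rw [Topology.IsEmbedding.isCompact_iff (Topology.IsEmbedding.subtypeVal)]
    convert hCcomp
    ext x
    simp only [Set.mem_image, Metric.mem_closedBall, dist_zero_right, hCdef, Set.mem_inter_iff,
      SetLike.mem_coe]
    constructor
    · rintro ⟨⟨y, hy⟩, hny, rfl⟩
      exact ⟨hy, by simpa using hny⟩
    · rintro ⟨h1, h2⟩
      exact ⟨⟨x, h1⟩, by simpa using h2, rfl⟩
  exact FiniteDimensional.of_isCompact_closedBall₀ ℂ one_pos hball

/-- If `S ∘ T = 1 + compact`, then `T` has closed range. -/
theorem aux_range_closed' (T S : H →L[ℂ] H) (hK : IsCompactOperator ⇑(S ∘L T - 1)) :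
    IsClosed (LinearMap.range (T : H →ₗ[ℂ] H) : Set H) := by
  set K : H →L[ℂ] H := S ∘L T - 1 with hKdef
  have key : ∀ x, S (T x) = x + K x := by intro x; simp [hKdef]
  set N : Submodule ℂ H := LinearMap.ker (T : H →ₗ[ℂ] H) with hNdef
  haveI : FiniteDimensional ℂ N := aux_ker_fd' T S hK
  haveI : CompleteSpace N := FiniteDimensional.complete ℂ N
  set M : Submodule ℂ H := Nᗮ with hMdef
  have hcompl : IsCompl N M := Submodule.isCompl_orthogonal_of_hasOrthogonalProjection
  -- T is bounded below on M
  have hbdd : ∃ c : ℝ, 0 < c ∧ ∀ m ∈ M, c * ‖m‖ ≤ ‖T m‖ := by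
    by_contra hcon
    push_neg at hcon
    have hseq : ∀ n : ℕ, ∃ u : H, u ∈ M ∧ ‖u‖ = 1 ∧ ‖T u‖ ≤ ((n : ℝ) + 1)⁻¹ := by
      intro n
      obtain ⟨m, hmM, hm⟩ := hcon (((n : ℝ) + 1)⁻¹) (by positivity)
      have hm0 : m ≠ 0 := by
        rintro rfl; simp at hm
      have hnm : (0:ℝ) < ‖m‖ := norm_pos_iff.mpr hm0
      refine ⟨((‖m‖ : ℂ))⁻¹ • m, M.smul_mem _ hmM, ?_, ?_⟩
      · rw [norm_smul]
        simp [hm0, inv_mul_cancel₀, hnm.ne']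
      · rw [map_smul, norm_smul]
        have : ‖((‖m‖:ℂ))⁻¹‖ = ‖m‖⁻¹ := by simp
        rw [this, inv_mul_le_iff₀ hnm, mul_comm]
        exact hm.le
    choose u huM hunorm huT using hseq
    obtain ⟨Cm, hCmc, hCmsub⟩ := hK.image_subset_compact_of_bounded
      (S := Metric.closedBall (0 : H) 1) Metric.isBounded_closedBall
    have hKmem : ∀ n, K (u n) ∈ Cm := fun n =>
      hCmsub ⟨u n, by simp [hunorm n], rfl⟩
    obtain ⟨y, _, ψ, hψ, hconv⟩ := hCmc.isSeqCompact hKmem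
    have hTu : Filter.Tendsto (fun n => T (u n)) Filter.atTop (nhds 0) := by
      apply squeeze_zero_norm (fun n => huT n)
      exact tendsto_one_div_add_atTop_nhds_zero_nat.congr (by intro n; rw [one_div])
    have hTuψ : Filter.Tendsto (fun n => T (u (ψ n))) Filter.atTop (nhds 0) :=
      hTu.comp hψ.tendsto_atTop
    have hSTuψ : Filter.Tendsto (fun n => S (T (u (ψ n)))) Filter.atTop (nhds 0) := by
      have := (S.continuous.tendsto 0).comp hTuψ
      simpa [Function.comp_def] using this
    have huψ : Filter.Tendsto (fun n => u (ψ n)) Filter.atTop (nhds (-y)) := by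
      have : (fun n => u (ψ n)) = fun n => S (T (u (ψ n))) - K (u (ψ n)) := by
        funext n; rw [key]; abel
      rw [this]
      simpa using hSTuψ.sub hconv
    have hyM : -y ∈ M := by
      refine (Submodule.isClosed_orthogonal N).mem_of_tendsto huψ ?_
      exact Filter.Eventually.of_forall fun n => huM _
    have hyN : -y ∈ N := by
      have h1 : Filter.Tendsto (fun n => T (u (ψ n))) Filter.atTop (nhds (T (-y))) :=
        (T.continuous.tendsto _).comp huψ
      have h2 : T (-y) = 0 := tendsto_nhds_unique h1 hTuψ
      exact h2
    have hy0 : -y = 0 := by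
      have := hcompl.disjoint
      exact Submodule.disjoint_def.mp this _ hyN hyM
    have hn1 : ‖(-y : H)‖ = 1 := by
      have : Filter.Tendsto (fun n => ‖u (ψ n)‖) Filter.atTop (nhds ‖-y‖) :=
        (continuous_norm.tendsto _).comp huψ
      have h2 : Filter.Tendsto (fun _ : ℕ => (1:ℝ)) Filter.atTop (nhds ‖-y‖) := by
        simpa [hunorm] using this
      exact (tendsto_nhds_unique tendsto_const_nhds h2).symm
    rw [hy0] at hn1; simp at hn1
  obtain ⟨c, hc, hbound⟩ := hbdd
  -- restriction of T to M
  set T₀ : M →L[ℂ] H := T.comp M.subtypeL with hT₀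
  have hanti : AntilipschitzWith (⟨c, hc.le⟩ : NNReal)⁻¹ T₀ := by
    apply T₀.antilipschitz_of_bound
    intro x
    have hcoe : (((⟨c, hc.le⟩ : NNReal)⁻¹ : NNReal) : ℝ) = c⁻¹ := NNReal.coe_inv _
    rw [hcoe, le_inv_mul_iff₀ hc]
    exact hbound x.1 x.2
  haveI : CompleteSpace M := N.instOrthogonalCompleteSpace
  have hclosed₀ : IsClosed (Set.range T₀) := hanti.isClosed_range T₀.uniformContinuous
  have : (LinearMap.range (T : H →ₗ[ℂ] H) : Set H) = Set.range T₀ := by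
    apply Set.Subset.antisymm
    · rintro _ ⟨x, rfl⟩
      have hx : x ∈ N ⊔ M := by rw [hcompl.codisjoint.eq_top]; trivial
      obtain ⟨n, hn, m, hm, rfl⟩ := Submodule.mem_sup.mp hx
      have hTn : T n = 0 := hn
      exact ⟨⟨m, hm⟩, by simp [hT₀, map_add, hTn]⟩
    · rintro _ ⟨m, rfl⟩
      exact ⟨m.1, rfl⟩
  rw [this]; exact hclosed₀

/-- Schauder: the adjoint of a compact operator on a Hilbert space is compact. -/
theorem aux_schauder' (K : H →L[ℂ] H) (hK : IsCompactOperator ⇑K) :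
    IsCompactOperator ⇑(ContinuousLinearMap.adjoint K) := by
  classical
  set ad : H →L[ℂ] H := ContinuousLinearMap.adjoint K with had
  set A : H →L[ℂ] H := K ∘L ad with hA
  have hAc : IsCompactOperator ⇑A := by
    have := hK.comp_clm ad
    rwa [← ContinuousLinearMap.coe_comp'] at this
  set B1 := Metric.closedBall (0:H) 1 with hB1
  -- key inequality
  have key : ∀ u : H, ‖u‖ ≤ 2 → ‖ad u‖^2 ≤ 2 * ‖A u‖ := by
    intro u hu
    have h1 : ‖ad u‖^2 = RCLike.re (inner (𝕜 := ℂ) (ad u) (ad u)) :=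
      (inner_self_eq_norm_sq _).symm
    have h2 : (inner (𝕜 := ℂ) (ad u) (ad u)) = inner (𝕜 := ℂ) u (A u) := by
      rw [had, ContinuousLinearMap.adjoint_inner_left]
      rfl
    calc ‖ad u‖^2 = RCLike.re (inner (𝕜 := ℂ) u (A u)) := by rw [h1, h2]
      _ ≤ ‖(inner (𝕜 := ℂ) u (A u))‖ := RCLike.re_le_norm _
      _ ≤ ‖u‖ * ‖A u‖ := norm_inner_le_norm _ _
      _ ≤ 2 * ‖A u‖ := by
          have := norm_nonneg (A u)
          nlinarith
  suffices h : IsCompactOperator ⇑(ad : H →ₗ[ℂ] H) by simpa using h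
  rw [isCompactOperator_iff_isCompact_closure_image_closedBall (ad : H →ₗ[ℂ] H) one_pos]
  refine TotallyBounded.isCompact_of_isClosed ?_ isClosed_closure
  refine TotallyBounded.closure ?_
  rw [Metric.totallyBounded_iff]
  intro ε hε
  have hδ : (0:ℝ) < ε^2/8 := by positivity
  have hAtb : TotallyBounded (⇑A '' B1) :=
    ((hAc.isCompact_closure_image_closedBall 1).totallyBounded).subset subset_closure
  obtain ⟨t, htfin, htcover⟩ := Metric.totallyBounded_iff.mp hAtb (ε^2/8) hδ
  have hchoice : ∀ z : H, ∃ w : H, (∃ x ∈ B1, A x ∈ Metric.ball z (ε^2/8)) →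
      (w ∈ B1 ∧ A w ∈ Metric.ball z (ε^2/8)) := by
    intro z
    by_cases h : ∃ x ∈ B1, A x ∈ Metric.ball z (ε^2/8)
    · obtain ⟨x, hx1, hx2⟩ := h; exact ⟨x, fun _ => ⟨hx1, hx2⟩⟩
    · exact ⟨0, fun hc => absurd hc h⟩
  choose w hw using hchoice
  refine ⟨(fun z => ad (w z)) '' t, htfin.image _, ?_⟩
  rintro _ ⟨x, hxB, rfl⟩
  have hx' : A x ∈ ⋃ y ∈ t, Metric.ball y (ε^2/8) := htcover ⟨x, hxB, rfl⟩
  obtain ⟨z, hzt, hz⟩ := Set.mem_iUnion₂.mp hx'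
  obtain ⟨hw1, hw2⟩ := hw z ⟨x, hxB, hz⟩
  refine Set.mem_iUnion₂.mpr ⟨ad (w z), ⟨z, hzt, rfl⟩, ?_⟩
  rw [Metric.mem_ball, dist_eq_norm]
  show ‖ad x - ad (w z)‖ < ε
  have hsub : ‖x - w z‖ ≤ 2 := by
    have h1 : ‖x‖ ≤ 1 := by simpa [hB1] using hxB
    have h2 : ‖w z‖ ≤ 1 := by simpa [hB1] using hw1
    calc ‖x - w z‖ ≤ ‖x‖ + ‖w z‖ := norm_sub_le _ _
      _ ≤ 2 := by linarith
  have hAd : ‖A x - A (w z)‖ ≤ ε^2/4 := by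
    have d1 : dist (A x) z < ε^2/8 := hz
    have d2 : dist (A (w z)) z < ε^2/8 := hw2
    calc ‖A x - A (w z)‖ = dist (A x) (A (w z)) := (dist_eq_norm _ _).symm
      _ ≤ dist (A x) z + dist z (A (w z)) := dist_triangle _ _ _
      _ = dist (A x) z + dist (A (w z)) z := by rw [dist_comm z]
      _ ≤ ε^2/8 + ε^2/8 := by linarith
      _ = ε^2/4 := by ring
  have hk : ‖ad x - ad (w z)‖^2 ≤ 2 * ‖A x - A (w z)‖ := by
    have := key (x - w z) hsub
    simpa [map_sub] using this
  nlinarith [norm_nonneg (ad x - ad (w z)), hε]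

theorem aux_ker_adjoint' (T : H →L[ℂ] H) :
    LinearMap.ker (ContinuousLinearMap.adjoint T : H →ₗ[ℂ] H) = (LinearMap.range (T : H →ₗ[ℂ] H))ᗮ := by
  ext y
  rw [LinearMap.mem_ker, Submodule.mem_orthogonal]
  constructor
  · rintro h _ ⟨x, rfl⟩
    change inner ℂ (T x) y = 0
    rw [← ContinuousLinearMap.adjoint_inner_right T x y]
    simp [show (ContinuousLinearMap.adjoint T) y = 0 from h]
  · intro h
    have h3 : (inner (𝕜 := ℂ) (T (ContinuousLinearMap.adjoint T y)) y) = 0 := h _ ⟨_, rfl⟩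
    have h2 : (inner (𝕜 := ℂ) (ContinuousLinearMap.adjoint T y)
        (ContinuousLinearMap.adjoint T y)) = 0 := by
      rw [ContinuousLinearMap.adjoint_inner_left, ← inner_conj_symm, h3, map_zero]
    exact inner_self_eq_zero.mp h2
  -- note: mem_orthogonal uses ⟪u, v⟫ with u ∈ K; check orientation

theorem aux_coker_fd' (T : H →L[ℂ] H) (hcl : IsClosed (LinearMap.range (T : H →ₗ[ℂ] H) : Set H))
    (hfd : FiniteDimensional ℂ ((LinearMap.range (T : H →ₗ[ℂ] H))ᗮ)) :
    FiniteDimensional ℂ (H ⧸ LinearMap.range (T : H →ₗ[ℂ] H)) := by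
  haveI : CompleteSpace (LinearMap.range (T : H →ₗ[ℂ] H)) := hcl.completeSpace_coe
  have hc : IsCompl (LinearMap.range (T : H →ₗ[ℂ] H)) (LinearMap.range (T : H →ₗ[ℂ] H))ᗮ :=
    Submodule.isCompl_orthogonal_of_hasOrthogonalProjection
  exact Module.Finite.equiv (Submodule.quotientEquivOfIsCompl _ _ hc).symm

end AuxFredholm

/-- if φ is invertible and almost commutes with P♭ then φP♭ + P♯ is
Fredholm, (H♯, φ(H♭)) is a Fredholm pair, and the indices agree. -/
theorem stmt2 {H : Type*} [NormedAddCommGroup H] [InnerProductSpace ℂ H] [CompleteSpace H]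
    (Pb Ps : H →L[ℂ] H) (hPb : Pb ∘L Pb = Pb) (hsum : Pb + Ps = 1)
    (φ : H ≃L[ℂ] H)
    (hcomm : IsCompactOperator ((φ : H →L[ℂ] H) ∘L Pb - Pb ∘L (φ : H →L[ℂ] H))) :
    IsFredholmOp ((φ : H →L[ℂ] H) ∘L Pb + Ps) ∧
      IsFredholmPair (LinearMap.range (Ps : H →ₗ[ℂ] H))
        ((LinearMap.range (Pb : H →ₗ[ℂ] H)).map ((φ : H →L[ℂ] H) : H →ₗ[ℂ] H)) ∧
      pairIndex (LinearMap.range (Ps : H →ₗ[ℂ] H))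
          ((LinearMap.range (Pb : H →ₗ[ℂ] H)).map ((φ : H →L[ℂ] H) : H →ₗ[ℂ] H)) =
        opIndex ((φ : H →L[ℂ] H) ∘L Pb + Ps) := by
  classical
  set f : H →L[ℂ] H := (φ : H →L[ℂ] H) with hfdef
  set g : H →L[ℂ] H := (φ.symm : H →L[ℂ] H) with hgdef
  have hgf : ∀ x, g (f x) = x := fun x => φ.symm_apply_apply x
  have hfg : ∀ x, f (g x) = x := fun x => φ.apply_symm_apply x
  have hPs : ∀ x, Ps x = x - Pb x := by
    intro x
    have h := congrArg (fun (L : H →L[ℂ] H) => L x) hsum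
    simp only [ContinuousLinearMap.add_apply, ContinuousLinearMap.one_apply] at h
    exact eq_sub_of_add_eq' h
  have hPbPb : ∀ x, Pb (Pb x) = Pb x := by
    intro x
    have h := congrArg (fun (L : H →L[ℂ] H) => L x) hPb
    simpa using h
  have hPbPs : ∀ x, Pb (Ps x) = 0 := by
    intro x; rw [hPs, map_sub, hPbPb, sub_self]
  have hPsPb : ∀ x, Ps (Pb x) = 0 := by
    intro x; rw [hPs, hPbPb, sub_self]
  have hPsPs : ∀ x, Ps (Ps x) = Ps x := by
    intro x
    have h := hPs (Ps x)
    rw [hPbPs, sub_zero] at h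
    exact h
  set T : H →L[ℂ] H := f ∘L Pb + Ps with hTdef
  set S : H →L[ℂ] H := g ∘L Pb + Ps with hSdef
  set C : H →L[ℂ] H := f ∘L Pb - Pb ∘L f with hCdef
  have hCc : IsCompactOperator ⇑C := hcomm
  have hTx : ∀ x, T x = f (Pb x) + Ps x := by intro x; simp [hTdef]
  have hSx : ∀ x, S x = g (Pb x) + Ps x := by intro x; simp [hSdef]
  have hCx : ∀ x, C x = f (Pb x) - Pb (f x) := by intro x; simp [hCdef]
  -- identity 1 : S T - 1 = (Ps - g) C Pb
  have hid1 : S ∘L T - 1 = (Ps - g) ∘L (C ∘L Pb) := by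
    ext x
    simp only [ContinuousLinearMap.comp_apply, ContinuousLinearMap.sub_apply,
      ContinuousLinearMap.add_apply, ContinuousLinearMap.one_apply]
    rw [hSx, hTx, hCx]
    simp only [map_add, map_sub, hPbPb, hPbPs, hPsPb, hPsPs, hgf, hfg, map_zero]
    rw [hPs x]
    abel
  -- identity 2 : T S - 1 = (1 - Ps g) C (g Pb)
  have hid2 : T ∘L S - 1 = ((1 - Ps ∘L g) ∘L C) ∘L (g ∘L Pb) := by
    ext x
    simp only [ContinuousLinearMap.comp_apply, ContinuousLinearMap.sub_apply,
      ContinuousLinearMap.add_apply, ContinuousLinearMap.one_apply]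
    rw [hTx, hSx, hCx]
    simp only [map_add, map_sub, hPbPb, hPbPs, hPsPb, hPsPs, hgf, hfg, map_zero]
    rw [hPs x]
    abel
  have hK1c : IsCompactOperator ⇑(S ∘L T - 1) := by
    rw [hid1]
    exact (hCc.comp_clm Pb).clm_comp (Ps - g)
  have hK2c : IsCompactOperator ⇑(T ∘L S - 1) := by
    rw [hid2]
    exact ((hCc.comp_clm (g ∘L Pb)).clm_comp (1 - Ps ∘L g))
  have hkerfd : FiniteDimensional ℂ (LinearMap.ker (T : H →ₗ[ℂ] H)) := aux_ker_fd' T S hK1c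
  have hrc : IsClosed (LinearMap.range (T : H →ₗ[ℂ] H) : Set H) := aux_range_closed' T S hK1c
  -- cokernel
  have hadj_eq : (ContinuousLinearMap.adjoint S) ∘L (ContinuousLinearMap.adjoint T) - 1 =
      ContinuousLinearMap.adjoint (T ∘L S - 1) := by
    rw [map_sub, ContinuousLinearMap.adjoint_comp]
    congr 1
    rw [ContinuousLinearMap.one_def, ContinuousLinearMap.adjoint_id]
  have hkerad : FiniteDimensional ℂ (LinearMap.ker (ContinuousLinearMap.adjoint T : H →ₗ[ℂ] H)) := by
    refine aux_ker_fd' _ (ContinuousLinearMap.adjoint S) ?_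
    rw [hadj_eq]
    exact aux_schauder' _ hK2c
  rw [aux_ker_adjoint'] at hkerad
  have hcok : FiniteDimensional ℂ (H ⧸ LinearMap.range (T : H →ₗ[ℂ] H)) := aux_coker_fd' T hrc hkerad
  -- membership characterizations
  have hmem_Pb : ∀ x, x ∈ LinearMap.range (Pb : H →ₗ[ℂ] H) ↔ Pb x = x := by
    intro x
    constructor
    · rintro ⟨y, rfl⟩; exact hPbPb y
    · intro h; exact ⟨x, h⟩
  have hmem_Ps : ∀ x, x ∈ LinearMap.range (Ps : H →ₗ[ℂ] H) ↔ Ps x = x := by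
    intro x
    constructor
    · rintro ⟨y, rfl⟩; exact hPsPs y
    · intro h; exact ⟨x, h⟩
  set A : Submodule ℂ H := LinearMap.range (Ps : H →ₗ[ℂ] H) with hAdef
  set B : Submodule ℂ H := (LinearMap.range (Pb : H →ₗ[ℂ] H)).map ((f : H →L[ℂ] H) : H →ₗ[ℂ] H) with hBdef
  -- range equality
  have hrange_eq : LinearMap.range (T : H →ₗ[ℂ] H) = A ⊔ B := by
    apply le_antisymm
    · rintro _ ⟨x, rfl⟩
      have hx : T x = f (Pb x) + Ps x := hTx x
      show T x ∈ A ⊔ B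
      rw [hx]
      exact Submodule.add_mem _
        (Submodule.mem_sup_right ⟨Pb x, ⟨x, rfl⟩, rfl⟩)
        (Submodule.mem_sup_left ⟨x, rfl⟩)
    · rw [sup_le_iff]
      constructor
      · rintro _ ⟨x, rfl⟩
        refine ⟨Ps x, ?_⟩
        show T (Ps x) = Ps x
        rw [hTx, hPbPs, map_zero, hPsPs, zero_add]
      · rintro _ ⟨_, ⟨x, rfl⟩, rfl⟩
        refine ⟨Pb x, ?_⟩
        show T (Pb x) = f (Pb x)
        rw [hTx, hPbPb, hPsPb, add_zero]
  -- kernel equivalence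
  have hmemAB : ∀ x : LinearMap.ker (T : H →ₗ[ℂ] H), f (Pb x.1) ∈ A ⊓ B := by
    rintro ⟨x, hx⟩
    have hx' : f (Pb x) + Ps x = 0 := by rw [← hTx]; exact hx
    constructor
    · rw [hAdef, SetLike.mem_coe, hmem_Ps]
      have : f (Pb x) = -Ps x := by linear_combination (norm := abel) hx'
      rw [this, map_neg, hPsPs]
    · exact ⟨Pb x, ⟨x, rfl⟩, rfl⟩
  let ℓ : ↥(LinearMap.ker (T : H →ₗ[ℂ] H)) →ₗ[ℂ] ↥(A ⊓ B) :=
    LinearMap.codRestrict (A ⊓ B)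
      (((f ∘L Pb : H →L[ℂ] H) : H →ₗ[ℂ] H) ∘ₗ (LinearMap.ker (T : H →ₗ[ℂ] H)).subtype) (fun c => by
        simpa using hmemAB c)
  have hinj : Function.Injective ℓ := by
    rw [← LinearMap.ker_eq_bot, LinearMap.ker_eq_bot']
    rintro ⟨x, hx⟩ hm
    have hx' : f (Pb x) + Ps x = 0 := by rw [← hTx]; exact hx
    have hval : f (Pb x) = 0 := congrArg Subtype.val hm
    have hPbx : Pb x = 0 := by rw [← hgf (Pb x), hval, map_zero]
    have hPsx : Ps x = 0 := by rw [hval, zero_add] at hx'; exact hx'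
    have : x = 0 := by
      have := hPs x
      rw [hPsx, hPbx, sub_zero] at this
      exact this.symm
    exact Subtype.ext this
  have hsurj : Function.Surjective ℓ := by
    rintro ⟨y, hyA, hyB⟩
    have hyPs : Ps y = y := (hmem_Ps y).mp hyA
    obtain ⟨b, hb, hfb⟩ := hyB
    have hPbb : Pb b = b := (hmem_Pb b).mp hb
    have hfb' : f b = y := hfb
    have hbg : b = g y := by rw [← hfb', hgf]
    have hPby : Pb y = 0 := by
      conv_lhs => rw [← hyPs]
      exact hPbPs y
    have hPbgy : Pb (g y) = g y := by rw [← hbg, hPbb]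
    have hPsgy : Ps (g y) = 0 := by rw [← hbg, ← hPbb, hPsPb]
    set x : H := g y - y with hxdef
    have hxker : T x = 0 := by
      rw [hTx]
      simp only [hxdef, map_sub, hPbgy, hPby, hPsgy, hyPs, sub_zero, map_zero, hfg]
      abel
    refine ⟨⟨x, hxker⟩, ?_⟩
    apply Subtype.ext
    show f (Pb x) = y
    simp only [hxdef, map_sub, hPbgy, hPby, sub_zero, map_zero, hfg]
  let e : ↥(LinearMap.ker (T : H →ₗ[ℂ] H)) ≃ₗ[ℂ] ↥(A ⊓ B) := LinearEquiv.ofBijective ℓ ⟨hinj, hsurj⟩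
  haveI := hkerfd
  have hABfd : FiniteDimensional ℂ ↥(A ⊓ B) := Module.Finite.equiv e
  refine ⟨⟨hkerfd, hrc, hcok⟩, ⟨hABfd, ?_, ?_⟩, ?_⟩
  · rw [← hrange_eq]; exact hrc
  · rw [← hrange_eq]; exact hcok
  · simp only [pairIndex, opIndex]
    rw [← hrange_eq, ← e.finrank_eq]
end

section
/- Let H = H♭ ⊕ H♯ with projectors P♭, P♯. The map ind~ : GL(P♭, K) → ℤ defined by ind~(φ) = ind(φP♭ + P♯) is a group homomorphism: for φ, ψ ∈ GL(P♭, K), ind~(φψ) = ind~(φ) + ind~(ψ). -/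
open Submodule Module

section Aux
open Submodule Module LinearMap


variable {E : Type*} [AddCommGroup E] [Module ℂ E]
variable {V W : Type*} [AddCommGroup V] [Module ℂ V] [AddCommGroup W] [Module ℂ W]

noncomputable def aInd (f : E →ₗ[ℂ] E) : ℤ :=
  (finrank ℂ (LinearMap.ker f) : ℤ) - finrank ℂ (E ⧸ LinearMap.range f)

lemma fd_of_map (j : V →ₗ[ℂ] W) [FiniteDimensional ℂ W]
    (h : FiniteDimensional ℂ (LinearMap.ker j)) : FiniteDimensional ℂ V := by
  have hq : FiniteDimensional ℂ (V ⧸ LinearMap.ker j) :=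
    Module.Finite.equiv j.quotKerEquivRange.symm
  have h1 := Submodule.rank_quotient_add_rank (LinearMap.ker j)
  have : Module.rank ℂ V < Cardinal.aleph0 := by
    rw [← h1]; exact Cardinal.add_lt_aleph0 (rank_lt_aleph0 ℂ _) (rank_lt_aleph0 ℂ _)
  rw [FiniteDimensional, ← Module.rank_lt_aleph0_iff]; exact this

theorem aInd_comp (f g : E →ₗ[ℂ] E)
    (hkf : FiniteDimensional ℂ (LinearMap.ker f)) (hkg : FiniteDimensional ℂ (LinearMap.ker g))
    (hcf : FiniteDimensional ℂ (E ⧸ LinearMap.range f))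
    (hcg : FiniteDimensional ℂ (E ⧸ LinearMap.range g)) :
    FiniteDimensional ℂ (LinearMap.ker (f ∘ₗ g)) ∧
      FiniteDimensional ℂ (E ⧸ LinearMap.range (f ∘ₗ g)) ∧
      aInd (f ∘ₗ g) = aInd f + aInd g := by
  set C := f ∘ₗ g with hC
  have hgk : ∀ x : E, x ∈ LinearMap.ker C → g x ∈ LinearMap.ker f := by
    intro x hx; exact hx
  set j : LinearMap.ker C →ₗ[ℂ] LinearMap.ker f := g.restrict hgk with hj
  set δ : LinearMap.ker f →ₗ[ℂ] E ⧸ LinearMap.range g :=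
    (LinearMap.range g).mkQ ∘ₗ (LinearMap.ker f).subtype with hδ
  have hle : LinearMap.range g ≤ Submodule.comap f (LinearMap.range C) := by
    rintro x ⟨w, rfl⟩; exact ⟨w, rfl⟩
  set q : (E ⧸ LinearMap.range g) →ₗ[ℂ] E ⧸ LinearMap.range C :=
    Submodule.mapQ _ _ f hle with hq
  have hle2 : LinearMap.range C ≤ Submodule.comap (LinearMap.id (R := ℂ) (M := E)) (LinearMap.range f) := by
    rintro x ⟨w, rfl⟩; exact ⟨g w, rfl⟩
  set p : (E ⧸ LinearMap.range C) →ₗ[ℂ] E ⧸ LinearMap.range f :=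
    Submodule.mapQ _ _ LinearMap.id hle2 with hp
  -- kernel of j
  have hkerj : LinearMap.ker j = Submodule.comap (LinearMap.ker C).subtype (LinearMap.ker g) :=
    LinearMap.ker_restrict hgk
  have hkgle : LinearMap.ker g ≤ LinearMap.ker C := by
    intro x hx
    have hx' : g x = 0 := hx
    show f (g x) = 0
    rw [hx', map_zero]
  have fdkerj : FiniteDimensional ℂ (LinearMap.ker j) := by
    rw [hkerj]; exact Module.Finite.equiv (Submodule.comapSubtypeEquivOfLe hkgle).symm
  have fdkerC : FiniteDimensional ℂ (LinearMap.ker C) := fd_of_map j fdkerj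
  -- range j = ker δ
  have hrj : LinearMap.range j = LinearMap.ker δ := by
    ext a
    simp only [LinearMap.mem_range, LinearMap.mem_ker, hδ, LinearMap.comp_apply,
      Submodule.mkQ_apply, Submodule.Quotient.mk_eq_zero, Submodule.coe_subtype]
    constructor
    · rintro ⟨x, rfl⟩; exact ⟨x, rfl⟩
    · rintro ⟨x, hx⟩
      have hxC : x ∈ LinearMap.ker C := by
        simp only [LinearMap.mem_ker, hC, LinearMap.comp_apply, hx]
        exact a.2
      exact ⟨⟨x, hxC⟩, by ext; simpa [hj, LinearMap.restrict_apply] using hx⟩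
  -- ker q = range δ
  have hkq : LinearMap.ker q = LinearMap.range δ := by
    have hrδ : LinearMap.range δ = Submodule.map (LinearMap.range g).mkQ (LinearMap.ker f) := by
      rw [hδ, LinearMap.range_comp, Submodule.range_subtype]
    rw [hrδ]
    ext y
    obtain ⟨x, rfl⟩ := (LinearMap.range g).mkQ_surjective y
    simp only [LinearMap.mem_ker, hq, Submodule.mkQ_apply, Submodule.mapQ_apply,
      Submodule.Quotient.mk_eq_zero, Submodule.mem_map, LinearMap.mem_range]
    constructor
    · rintro ⟨w, hw⟩
      have hxw : x - g w ∈ LinearMap.ker f := by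
        have hcw : C w = f (g w) := rfl
        simp only [LinearMap.mem_ker, map_sub, ← hcw, hw, sub_self]
      refine ⟨x - g w, hxw, ?_⟩
      rw [Submodule.Quotient.eq]
      exact ⟨-w, by simp⟩
    · rintro ⟨a, ha, hax⟩
      rw [Submodule.Quotient.eq] at hax
      obtain ⟨w, hw⟩ := hax
      refine ⟨-w, ?_⟩
      have hcw : C (-w) = f (g (-w)) := rfl
      rw [hcw, map_neg, map_neg, hw, map_sub, LinearMap.mem_ker.1 ha, zero_sub, neg_neg]
  -- ker p = range q
  have hkp : LinearMap.ker p = LinearMap.range q := by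
    ext y
    obtain ⟨x, rfl⟩ := (LinearMap.range C).mkQ_surjective y
    simp only [LinearMap.mem_ker, hp, Submodule.mkQ_apply, Submodule.mapQ_apply,
      LinearMap.id_apply, Submodule.Quotient.mk_eq_zero, LinearMap.mem_range]
    constructor
    · rintro ⟨w, rfl⟩
      refine ⟨Submodule.Quotient.mk w, ?_⟩
      rw [hq, Submodule.mapQ_apply]
    · rintro ⟨z, hz⟩
      obtain ⟨w, rfl⟩ := (LinearMap.range g).mkQ_surjective z
      rw [hq, Submodule.mkQ_apply, Submodule.mapQ_apply, Submodule.Quotient.eq] at hz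
      obtain ⟨v, hv⟩ := hz
      refine ⟨w - g v, ?_⟩
      have hcv : C v = f (g v) := rfl
      rw [map_sub, ← hcv, hv]
      abel
  -- p surjective
  have hps : LinearMap.range p = ⊤ := by
    rw [LinearMap.range_eq_top]
    intro y
    obtain ⟨x, rfl⟩ := (LinearMap.range f).mkQ_surjective y
    refine ⟨Submodule.Quotient.mk x, ?_⟩
    rw [hp, Submodule.mkQ_apply, Submodule.mapQ_apply, LinearMap.id_apply]
  -- finiteness of coker C
  have fdcokC : FiniteDimensional ℂ (E ⧸ LinearMap.range C) := by
    refine fd_of_map p ?_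
    rw [hkp]; infer_instance
  refine ⟨fdkerC, fdcokC, ?_⟩
  -- rank-nullity computations
  have e1 : finrank ℂ (LinearMap.range j) + finrank ℂ (LinearMap.ker j)
      = finrank ℂ (LinearMap.ker C) := LinearMap.finrank_range_add_finrank_ker j
  have e2 : finrank ℂ (LinearMap.range δ) + finrank ℂ (LinearMap.ker δ)
      = finrank ℂ (LinearMap.ker f) := LinearMap.finrank_range_add_finrank_ker δ
  have e3 : finrank ℂ (LinearMap.range q) + finrank ℂ (LinearMap.ker q)
      = finrank ℂ (E ⧸ LinearMap.range g) := LinearMap.finrank_range_add_finrank_ker q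
  have e4 : finrank ℂ (LinearMap.range p) + finrank ℂ (LinearMap.ker p)
      = finrank ℂ (E ⧸ LinearMap.range C) := LinearMap.finrank_range_add_finrank_ker p
  have e5 : finrank ℂ (LinearMap.ker j) = finrank ℂ (LinearMap.ker g) := by
    rw [hkerj]; exact (Submodule.comapSubtypeEquivOfLe hkgle).finrank_eq
  have e6 : finrank ℂ (LinearMap.range p) = finrank ℂ (E ⧸ LinearMap.range f) := by
    rw [hps]; exact finrank_top ℂ _
  rw [hrj] at e1
  rw [← hkq] at e2
  rw [hkp] at e4
  rw [e5] at e1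
  rw [e6] at e4
  unfold aInd
  omega

theorem aInd_one_add_fr (F : E →ₗ[ℂ] E) (hF : FiniteDimensional ℂ (LinearMap.range F)) :
    FiniteDimensional ℂ (LinearMap.ker (LinearMap.id + F)) ∧
      FiniteDimensional ℂ (E ⧸ LinearMap.range (LinearMap.id (R := ℂ) (M := E) + F)) ∧
      aInd (LinearMap.id + F) = 0 := by
  set V := LinearMap.range F with hV
  set T : E →ₗ[ℂ] E := LinearMap.id + F with hT
  have hTapp : ∀ x, T x = x + F x := fun x => rfl
  have hTV : ∀ v : E, v ∈ V → T v ∈ V := by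
    intro v hv; rw [hTapp]; exact V.add_mem hv (LinearMap.mem_range_self F v)
  set T' : V →ₗ[ℂ] V := T.restrict hTV with hT'
  have hkerle : LinearMap.ker T ≤ V := by
    intro x hx
    have : x + F x = 0 := hx
    have : x = -F x := eq_neg_of_add_eq_zero_left this
    rw [this]; exact V.neg_mem (LinearMap.mem_range_self F x)
  have hkT' : LinearMap.ker T' = Submodule.comap V.subtype (LinearMap.ker T) :=
    LinearMap.ker_restrict hTV
  have ekers : finrank ℂ (LinearMap.ker T') = finrank ℂ (LinearMap.ker T) := by
    rw [hkT']; exact (Submodule.comapSubtypeEquivOfLe hkerle).finrank_eq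
  have fdker : FiniteDimensional ℂ (LinearMap.ker T) :=
    Submodule.finiteDimensional_of_le hkerle
  set u : V →ₗ[ℂ] E ⧸ LinearMap.range T := (LinearMap.range T).mkQ ∘ₗ V.subtype with hu
  have hkeru : LinearMap.ker u = LinearMap.range T' := by
    ext v
    simp only [hu, LinearMap.mem_ker, LinearMap.comp_apply, Submodule.coe_subtype,
      Submodule.mkQ_apply, Submodule.Quotient.mk_eq_zero, LinearMap.mem_range]
    constructor
    · rintro ⟨x, hx⟩
      have hxV : x ∈ V := by
        have : x = (v : E) - F x := by rw [← hx, hTapp]; abel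
        rw [this]; exact V.sub_mem v.2 (LinearMap.mem_range_self F x)
      refine ⟨⟨x, hxV⟩, ?_⟩
      apply Subtype.ext
      simpa [hT', LinearMap.restrict_apply] using hx
    · rintro ⟨x, hx⟩
      refine ⟨(x : E), ?_⟩
      have := congrArg (Subtype.val) hx
      simpa [hT', LinearMap.restrict_apply] using this
  have hranu : LinearMap.range u = ⊤ := by
    rw [LinearMap.range_eq_top]
    intro y
    obtain ⟨x, rfl⟩ := (LinearMap.range T).mkQ_surjective y
    refine ⟨⟨-F x, V.neg_mem (LinearMap.mem_range_self F x)⟩, ?_⟩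
    simp only [hu, LinearMap.comp_apply, Submodule.coe_subtype, Submodule.mkQ_apply]
    rw [Submodule.Quotient.eq]
    exact ⟨-x, by rw [map_neg, hTapp]; abel⟩
  -- quotient equivalence
  have equot : (E ⧸ LinearMap.range T) ≃ₗ[ℂ] (V ⧸ LinearMap.range T') :=
    ((Submodule.quotEquivOfEq _ _ hkeru.symm).trans
      (u.quotKerEquivRange.trans (LinearEquiv.ofTop _ hranu))).symm
  have fdcok : FiniteDimensional ℂ (E ⧸ LinearMap.range T) := Module.Finite.equiv equot.symm
  refine ⟨fdker, fdcok, ?_⟩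
  have ecok : finrank ℂ (E ⧸ LinearMap.range T) = finrank ℂ (V ⧸ LinearMap.range T') :=
    equot.finrank_eq
  have e1 : finrank ℂ (V ⧸ LinearMap.range T') + finrank ℂ (LinearMap.range T')
      = finrank ℂ V := Submodule.finrank_quotient_add_finrank _
  have e2 : finrank ℂ (LinearMap.range T') + finrank ℂ (LinearMap.ker T')
      = finrank ℂ V := LinearMap.finrank_range_add_finrank_ker T'
  unfold aInd
  rw [ecok, ← ekers]
  omega

theorem ker_unit_comp (e : E ≃ₗ[ℂ] E) (f : E →ₗ[ℂ] E) :
    LinearMap.ker ((e : E →ₗ[ℂ] E) ∘ₗ f) = LinearMap.ker f := by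
  ext x; simp [LinearMap.mem_ker]

noncomputable def cok_unit_comp (e : E ≃ₗ[ℂ] E) (f : E →ₗ[ℂ] E) :
    (E ⧸ LinearMap.range ((e : E →ₗ[ℂ] E) ∘ₗ f)) ≃ₗ[ℂ] E ⧸ LinearMap.range f := by
  refine Submodule.Quotient.equiv _ _ e.symm ?_
  rw [LinearMap.range_comp]
  ext x
  simp only [Submodule.mem_map, LinearMap.mem_range]
  constructor
  · rintro ⟨y, ⟨z, ⟨w, rfl⟩, rfl⟩, rfl⟩
    exact ⟨w, by simp⟩
  · rintro ⟨z, rfl⟩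
    exact ⟨e (f z), ⟨f z, ⟨z, rfl⟩, rfl⟩, by simp⟩

theorem aInd_unit_comp (e : E ≃ₗ[ℂ] E) (f : E →ₗ[ℂ] E) :
    aInd ((e : E →ₗ[ℂ] E) ∘ₗ f) = aInd f := by
  unfold aInd
  rw [ker_unit_comp]
  rw [(cok_unit_comp e f).finrank_eq]

section Hilbert
variable {H : Type*} [NormedAddCommGroup H] [InnerProductSpace ℂ H] [CompleteSpace H]

-- sanity: ker/range of CLM agree definitionally with those of the coerced linear map
example (T : H →L[ℂ] H) : LinearMap.ker (T : H →ₗ[ℂ] H) = LinearMap.ker (T : H →ₗ[ℂ] H) := rfl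
example (T : H →L[ℂ] H) : LinearMap.range (T : H →ₗ[ℂ] H) = LinearMap.range (T : H →ₗ[ℂ] H) := rfl
example (T : H →L[ℂ] H) : opIndex T = aInd (T : H →ₗ[ℂ] H) := rfl

theorem approx_finite_rank (K : H →L[ℂ] H) (hK : IsCompactOperator ⇑K) :
    ∃ F : H →L[ℂ] H, FiniteDimensional ℂ (LinearMap.range (F : H →ₗ[ℂ] H)) ∧ ‖K - F‖ < 1 := by
  have hc : IsCompact (closure (⇑K '' Metric.closedBall 0 1)) := by
    have := IsCompactOperator.isCompact_closure_image_closedBall (f := (K : H →ₗ[ℂ] H)) hK 1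
    simpa using this
  have htb := hc.totallyBounded
  obtain ⟨t, htf, hcov⟩ := (Metric.totallyBounded_iff.1 htb) (1/2) (by norm_num)
  set V : Submodule ℂ H := Submodule.span ℂ t with hVdef
  have : FiniteDimensional ℂ V := FiniteDimensional.span_of_finite ℂ htf
  set P : H →L[ℂ] H := V.subtypeL ∘L orthogonalProjection V with hP
  set F : H →L[ℂ] H := P ∘L K with hF
  have hFr : FiniteDimensional ℂ (LinearMap.range (F : H →ₗ[ℂ] H)) := by
    have hle : LinearMap.range (F : H →ₗ[ℂ] H) ≤ V := by
      rintro x ⟨y, rfl⟩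
      exact (orthogonalProjection V (K y)).2
    exact Submodule.finiteDimensional_of_le hle
  refine ⟨F, hFr, ?_⟩
  have key : ∀ x : H, ‖(K - F) x‖ ≤ (1/2) * ‖x‖ := by
    have key1 : ∀ x : H, ‖x‖ ≤ 1 → ‖K x - P (K x)‖ ≤ 1/2 := by
      intro x hx
      have hmem : K x ∈ closure (⇑K '' Metric.closedBall 0 1) :=
        subset_closure ⟨x, Metric.mem_closedBall.2 (by simpa using hx), rfl⟩
      obtain ⟨z, hz, hdz⟩ := Set.mem_iUnion₂.1 (hcov hmem)
      have hzV : z ∈ V := Submodule.subset_span hz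
      have hmin : ‖K x - orthogonalProjection V (K x)‖ = ⨅ w : V, ‖K x - w‖ :=
        Submodule.starProjection_minimal (K x)
      have hle2 : (⨅ w : V, ‖K x - w‖) ≤ ‖K x - z‖ := by
        refine ciInf_le ⟨0, ?_⟩ (⟨z, hzV⟩ : V)
        rintro r ⟨w, rfl⟩; positivity
      have hdz' : ‖K x - z‖ < 1/2 := by
        rw [Metric.mem_ball, dist_eq_norm] at hdz; exact hdz
      have : ‖K x - P (K x)‖ ≤ ‖K x - z‖ := by
        rw [hP]; rw [← hmin] at hle2; exact le_trans (le_of_eq rfl) (hmin ▸ hle2)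
      linarith
    intro x
    rcases eq_or_ne x 0 with rfl | hx0
    · simp
    · have hnx : (0:ℝ) < ‖x‖ := norm_pos_iff.2 hx0
      set u : H := (‖x‖:ℝ)⁻¹ • x with hu
      have hun : ‖u‖ ≤ 1 := by
        rw [hu, norm_smul]
        simp [abs_of_pos hnx, inv_mul_cancel₀ hnx.ne']
      have h1 : (K - F) x = (‖x‖:ℝ) • (K - F) u := by
        rw [hu, ContinuousLinearMap.map_smul_of_tower, smul_smul, mul_inv_cancel₀ hnx.ne', one_smul]
      have h2 : ‖(K - F) u‖ ≤ 1/2 := by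
        have : (K - F) u = K u - P (K u) := by simp [hF, ContinuousLinearMap.sub_apply]
        rw [this]; exact key1 u hun
      rw [h1, norm_smul]
      simp only [norm_norm]  -- ‖‖x‖‖ = ‖x‖? it's Real.norm...
      calc ‖x‖ * ‖(K - F) u‖ ≤ ‖x‖ * (1/2) := by
            exact mul_le_mul_of_nonneg_left h2 (le_of_lt hnx)
        _ = (1/2) * ‖x‖ := by ring
  have : ‖K - F‖ ≤ 1/2 := ContinuousLinearMap.opNorm_le_bound _ (by norm_num) key
  linarith

theorem fred_one_add_compact (K : H →L[ℂ] H) (hK : IsCompactOperator ⇑K) :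
    FiniteDimensional ℂ (LinearMap.ker ((1 + K : H →L[ℂ] H) : H →ₗ[ℂ] H)) ∧
      FiniteDimensional ℂ (H ⧸ LinearMap.range ((1 + K : H →L[ℂ] H) : H →ₗ[ℂ] H)) ∧
      aInd ((1 + K : H →L[ℂ] H) : H →ₗ[ℂ] H) = 0 := by
  obtain ⟨F, hFr, hn⟩ := approx_finite_rank K hK
  have hn' : ‖-(K - F)‖ < 1 := by rwa [norm_neg]
  set u : (H →L[ℂ] H)ˣ := Units.oneSub (-(K - F)) hn' with hudef
  have huv : (u : H →L[ℂ] H) = 1 + (K - F) := by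
    show (1 : H →L[ℂ] H) - (-(K - F)) = 1 + (K - F)
    rw [sub_neg_eq_add]
  set G : H →L[ℂ] H := (↑u⁻¹ : H →L[ℂ] H) * F with hG
  have factor : (1 + K : H →L[ℂ] H) = (u : H →L[ℂ] H) * (1 + G) := by
    rw [hG, mul_add, mul_one, ← mul_assoc]
    rw [u.mul_inv, one_mul, huv]
    abel
  set e : H ≃ₗ[ℂ] H := (ContinuousLinearEquiv.unitsEquiv ℂ H u).toLinearEquiv with hedef
  have hlin : ((1 + K : H →L[ℂ] H) : H →ₗ[ℂ] H)
      = (e : H →ₗ[ℂ] H) ∘ₗ ((1 + G : H →L[ℂ] H) : H →ₗ[ℂ] H) := by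
    ext x
    have : (1 + K : H →L[ℂ] H) x = ((u : H →L[ℂ] H) * (1 + G)) x := by rw [← factor]
    simpa [ContinuousLinearMap.mul_apply, hedef,
      ContinuousLinearEquiv.unitsEquiv_apply] using this
  have hGlin : ((1 + G : H →L[ℂ] H) : H →ₗ[ℂ] H) = LinearMap.id + (G : H →ₗ[ℂ] H) := by
    ext x; simp
  have hfrG : FiniteDimensional ℂ (LinearMap.range (G : H →ₗ[ℂ] H)) := by
    have : LinearMap.range (G : H →ₗ[ℂ] H)
        = Submodule.map ((↑u⁻¹ : H →L[ℂ] H) : H →ₗ[ℂ] H) (LinearMap.range (F : H →ₗ[ℂ] H)) := by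
      rw [hG]
      exact LinearMap.range_comp _ _
    rw [this]
    exact Module.Finite.map _ _
  obtain ⟨h1, h2, h3⟩ := aInd_one_add_fr (G : H →ₗ[ℂ] H) hfrG
  rw [← hGlin] at h1 h2 h3
  refine ⟨?_, ?_, ?_⟩
  · rw [hlin, ker_unit_comp]; exact h1
  · rw [hlin]
    exact Module.Finite.equiv (cok_unit_comp e _).symm
  · rw [hlin, aInd_unit_comp]; exact h3

end Hilbert

section Assembly
variable {H : Type*} [NormedAddCommGroup H] [InnerProductSpace ℂ H] [CompleteSpace H]

lemma cptL (S : H →L[ℂ] H) {T : H →L[ℂ] H} (hT : IsCompactOperator ⇑T) :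
    IsCompactOperator ⇑(S * T) :=
  hT.continuous_comp S.continuous

lemma cptR {S : H →L[ℂ] H} (hS : IsCompactOperator ⇑S) (T : H →L[ℂ] H) :
    IsCompactOperator ⇑(S * T) :=
  hS.comp_clm T

lemma cptNeg {T : H →L[ℂ] H} (hT : IsCompactOperator ⇑T) : IsCompactOperator ⇑(-T) := hT.neg

lemma cptAdd {S T : H →L[ℂ] H} (hS : IsCompactOperator ⇑S) (hT : IsCompactOperator ⇑T) :
    IsCompactOperator ⇑(S + T) := hS.add hT

lemma fd_ker_of_left {S T K : H →L[ℂ] H} (hK : IsCompactOperator ⇑K)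
    (h : S * T = 1 + K) : FiniteDimensional ℂ (LinearMap.ker (T : H →ₗ[ℂ] H)) := by
  have h1 := (fred_one_add_compact K hK).1
  refine Submodule.finiteDimensional_of_le (S₂ := LinearMap.ker ((1 + K : H →L[ℂ] H) : H →ₗ[ℂ] H)) ?_
  intro x hx
  have hx' : T x = 0 := hx
  show (1 + K) x = 0
  rw [← h]
  show S (T x) = 0
  rw [hx', map_zero]

lemma fd_cok_of_right {T S' K : H →L[ℂ] H} (hK : IsCompactOperator ⇑K)
    (h : T * S' = 1 + K) :
    FiniteDimensional ℂ (H ⧸ LinearMap.range (T : H →ₗ[ℂ] H)) := by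
  have h2 := (fred_one_add_compact K hK).2.1
  have hle : LinearMap.range ((1 + K : H →L[ℂ] H) : H →ₗ[ℂ] H)
      ≤ Submodule.comap (LinearMap.id (R := ℂ) (M := H)) (LinearMap.range (T : H →ₗ[ℂ] H)) := by
    rintro x ⟨y, rfl⟩
    refine ⟨S' y, ?_⟩
    show (T * S') y = (1 + K) y
    rw [h]
  refine Module.Finite.of_surjective (Submodule.mapQ _ _ LinearMap.id hle) ?_
  intro y
  obtain ⟨x, rfl⟩ := (LinearMap.range (T : H →ₗ[ℂ] H)).mkQ_surjective y
  exact ⟨Submodule.Quotient.mk x, by rw [Submodule.mapQ_apply, LinearMap.id_apply,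
    Submodule.mkQ_apply]⟩

set_option maxHeartbeats 1000000 in
theorem stmt3_aux {H : Type*} [NormedAddCommGroup H] [InnerProductSpace ℂ H] [CompleteSpace H]
    (Pb Ps : H →L[ℂ] H) (hPb : Pb ∘L Pb = Pb) (hsum : Pb + Ps = 1)
    (φ ψ : H ≃L[ℂ] H)
    (hφ : IsCompactOperator ((φ : H →L[ℂ] H) ∘L Pb - Pb ∘L (φ : H →L[ℂ] H)))
    (hψ : IsCompactOperator ((ψ : H →L[ℂ] H) ∘L Pb - Pb ∘L (ψ : H →L[ℂ] H))) :
    opIndex (((ψ.trans φ : H ≃L[ℂ] H) : H →L[ℂ] H) ∘L Pb + Ps) =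
      opIndex ((φ : H →L[ℂ] H) ∘L Pb + Ps) + opIndex ((ψ : H →L[ℂ] H) ∘L Pb + Ps) := by
  have hs : Ps = 1 - Pb := by rw [← hsum]; abel
  set p : H →L[ℂ] H := Pb with hpdef
  set u : H →L[ℂ] H := (φ : H →L[ℂ] H) with hudef
  set u' : H →L[ℂ] H := (φ.symm : H →L[ℂ] H) with hu'def
  set v : H →L[ℂ] H := (ψ : H →L[ℂ] H) with hvdef
  set v' : H →L[ℂ] H := (ψ.symm : H →L[ℂ] H) with hv'def
  -- pointwise simp lemmas
  have hp : ∀ y, p (p y) = p y := fun y => congrFun (congrArg DFunLike.coe hPb) y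
  have hu : ∀ y, φ.symm (φ y) = y := φ.symm_apply_apply
  have hu' : ∀ y, φ (φ.symm y) = y := φ.apply_symm_apply
  have hv : ∀ y, ψ.symm (ψ y) = y := ψ.symm_apply_apply
  have hv' : ∀ y, ψ (ψ.symm y) = y := ψ.apply_symm_apply
  -- the operators
  set A : H →L[ℂ] H := u * p + (1 - p) with hAdef
  set B : H →L[ℂ] H := v * p + (1 - p) with hBdef
  set Cc : H →L[ℂ] H := (u * v) * p + (1 - p) with hCdef
  set Sφ : H →L[ℂ] H := u' * p + (1 - p) with hSφdef
  set Sψ : H →L[ℂ] H := v' * p + (1 - p) with hSψdef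
  -- the compact commutators
  set c : H →L[ℂ] H := u * p - p * u with hcdef
  set d : H →L[ℂ] H := v * p - p * v with hddef
  have hc : IsCompactOperator ⇑c := hφ
  have hd : IsCompactOperator ⇑d := hψ
  have hc' : IsCompactOperator ⇑(u' * p - p * u') := by
    have hid : u' * p - p * u' = -(u' * (c * u')) := by
      rw [hcdef]; ext x
      simp only [ContinuousLinearMap.add_apply, ContinuousLinearMap.sub_apply,
        ContinuousLinearMap.mul_apply, ContinuousLinearMap.one_apply,
        ContinuousLinearMap.neg_apply, ContinuousLinearMap.coe_coe,
        ContinuousLinearEquiv.coe_coe, hudef, hu'def, map_add, map_sub, map_neg,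
        hu, hu', hv, hv']
      abel
    rw [hid]
    exact (cptL u' (cptR hc u')).neg
  have hd' : IsCompactOperator ⇑(v' * p - p * v') := by
    have hid : v' * p - p * v' = -(v' * (d * v')) := by
      rw [hddef]; ext x
      simp only [ContinuousLinearMap.add_apply, ContinuousLinearMap.sub_apply,
        ContinuousLinearMap.mul_apply, ContinuousLinearMap.one_apply,
        ContinuousLinearMap.neg_apply, ContinuousLinearMap.coe_coe,
        ContinuousLinearEquiv.coe_coe, hvdef, hv'def, map_add, map_sub, map_neg,
        hu, hu', hv, hv']
      abel
    rw [hid]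
    exact (cptL v' (cptR hd v')).neg
  -- the error terms
  set K1 : H →L[ℂ] H := (u' * (p * u - u * p) + (u * p - p * u)) * p with hK1def
  set K2 : H →L[ℂ] H := (u * (p * u' - u' * p) + (u' * p - p * u')) * p with hK2def
  set K3 : H →L[ℂ] H := (v' * (p * v - v * p) + (v * p - p * v)) * p with hK3def
  set K4 : H →L[ℂ] H := (v * (p * v' - v' * p) + (v' * p - p * v')) * p with hK4def
  set K0 : H →L[ℂ] H := (u * (v * p - p * v) + (p * v - v * p)) * p with hK0def
  have hnc : IsCompactOperator ⇑(p * u - u * p) := by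
    have h : p * u - u * p = -c := by rw [hcdef]; noncomm_ring
    rw [h]; exact cptNeg hc
  have hnc' : IsCompactOperator ⇑(p * u' - u' * p) := by
    have h : p * u' - u' * p = -(u' * p - p * u') := by noncomm_ring
    rw [h]; exact cptNeg hc'
  have hnd : IsCompactOperator ⇑(p * v - v * p) := by
    have h : p * v - v * p = -d := by rw [hddef]; noncomm_ring
    rw [h]; exact cptNeg hd
  have hnd' : IsCompactOperator ⇑(p * v' - v' * p) := by
    have h : p * v' - v' * p = -(v' * p - p * v') := by noncomm_ring
    rw [h]; exact cptNeg hd'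
  have hK1 : IsCompactOperator ⇑K1 := by
    rw [hK1def, add_mul]
    exact cptAdd (cptR (cptL u' hnc) p) (cptR hc p)
  have hK2 : IsCompactOperator ⇑K2 := by
    rw [hK2def, add_mul]
    exact cptAdd (cptR (cptL u hnc') p) (cptR hc' p)
  have hK3 : IsCompactOperator ⇑K3 := by
    rw [hK3def, add_mul]
    exact cptAdd (cptR (cptL v' hnd) p) (cptR hd p)
  have hK4 : IsCompactOperator ⇑K4 := by
    rw [hK4def, add_mul]
    exact cptAdd (cptR (cptL v hnd') p) (cptR hd' p)
  have hK0 : IsCompactOperator ⇑K0 := by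
    rw [hK0def, add_mul]
    exact cptAdd (cptR (cptL u hd) p) (cptR hnd p)
  -- the five identities
  have I1 : Sφ * A = 1 + K1 := by
    ext x
    simp only [hSφdef, hAdef, hK1def, hudef, hu'def,
      ContinuousLinearMap.add_apply, ContinuousLinearMap.sub_apply,
      ContinuousLinearMap.mul_apply, ContinuousLinearMap.one_apply,
      ContinuousLinearMap.coe_coe, ContinuousLinearEquiv.coe_coe,
      map_add, map_sub, hp, hu, hu', hv, hv']
    abel
  have I2 : A * Sφ = 1 + K2 := by
    ext x
    simp only [hSφdef, hAdef, hK2def, hudef, hu'def,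
      ContinuousLinearMap.add_apply, ContinuousLinearMap.sub_apply,
      ContinuousLinearMap.mul_apply, ContinuousLinearMap.one_apply,
      ContinuousLinearMap.coe_coe, ContinuousLinearEquiv.coe_coe,
      map_add, map_sub, hp, hu, hu', hv, hv']
    abel
  have I3 : Sψ * B = 1 + K3 := by
    ext x
    simp only [hSψdef, hBdef, hK3def, hvdef, hv'def,
      ContinuousLinearMap.add_apply, ContinuousLinearMap.sub_apply,
      ContinuousLinearMap.mul_apply, ContinuousLinearMap.one_apply,
      ContinuousLinearMap.coe_coe, ContinuousLinearEquiv.coe_coe,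
      map_add, map_sub, hp, hu, hu', hv, hv']
    abel
  have I4 : B * Sψ = 1 + K4 := by
    ext x
    simp only [hSψdef, hBdef, hK4def, hvdef, hv'def,
      ContinuousLinearMap.add_apply, ContinuousLinearMap.sub_apply,
      ContinuousLinearMap.mul_apply, ContinuousLinearMap.one_apply,
      ContinuousLinearMap.coe_coe, ContinuousLinearEquiv.coe_coe,
      map_add, map_sub, hp, hu, hu', hv, hv']
    abel
  have I5 : Cc = A * B + K0 := by
    ext x
    simp only [hAdef, hBdef, hCdef, hK0def, hudef, hvdef,
      ContinuousLinearMap.add_apply, ContinuousLinearMap.sub_apply,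
      ContinuousLinearMap.mul_apply, ContinuousLinearMap.one_apply,
      ContinuousLinearMap.coe_coe, ContinuousLinearEquiv.coe_coe,
      map_add, map_sub, hp, hu, hu', hv, hv']
    abel
  -- derived identities for Cc
  set K6 : H →L[ℂ] H := K3 + (Sψ * K1 * B + Sψ * Sφ * K0) with hK6def
  set K7 : H →L[ℂ] H := K2 + (A * K4 * Sφ + K0 * (Sψ * Sφ)) with hK7def
  have hK6 : IsCompactOperator ⇑K6 := by
    rw [hK6def]
    exact hK3.add (((cptL Sψ (cptR hK1 B))).add (cptL Sψ (cptL Sφ hK0)))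
  have hK7 : IsCompactOperator ⇑K7 := by
    rw [hK7def]
    exact hK2.add ((cptL A (cptR hK4 Sφ)).add (cptR hK0 _))
  have I6 : (Sψ * Sφ) * Cc = 1 + K6 := by
    calc (Sψ * Sφ) * Cc = Sψ * (Sφ * A) * B + Sψ * Sφ * K0 := by rw [I5]; noncomm_ring
    _ = Sψ * (1 + K1) * B + Sψ * Sφ * K0 := by rw [I1]
    _ = Sψ * B + (Sψ * K1 * B + Sψ * Sφ * K0) := by noncomm_ring
    _ = 1 + K3 + (Sψ * K1 * B + Sψ * Sφ * K0) := by rw [I3]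
    _ = 1 + K6 := by rw [hK6def, add_assoc]
  have I7 : Cc * (Sψ * Sφ) = 1 + K7 := by
    calc Cc * (Sψ * Sφ) = A * (B * Sψ) * Sφ + K0 * (Sψ * Sφ) := by rw [I5]; noncomm_ring
    _ = A * (1 + K4) * Sφ + K0 * (Sψ * Sφ) := by rw [I4]
    _ = A * Sφ + (A * K4 * Sφ + K0 * (Sψ * Sφ)) := by noncomm_ring
    _ = 1 + K2 + (A * K4 * Sφ + K0 * (Sψ * Sφ)) := by rw [I2]
    _ = 1 + K7 := by rw [hK7def, add_assoc]
  -- Fredholm properties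
  have fdkA := fd_ker_of_left hK1 I1
  have fdcA := fd_cok_of_right hK2 I2
  have fdkSφ := fd_ker_of_left hK2 I2
  have fdcSφ := fd_cok_of_right hK1 I1
  have fdkB := fd_ker_of_left hK3 I3
  have fdcB := fd_cok_of_right hK4 I4
  have fdkSψ := fd_ker_of_left hK4 I4
  have fdcSψ := fd_cok_of_right hK3 I3
  have fdkC := fd_ker_of_left hK6 I6
  have fdcC := fd_cok_of_right hK7 I7
  -- index identities
  have coeM : ∀ S T : H →L[ℂ] H, ((S * T : H →L[ℂ] H) : H →ₗ[ℂ] H)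
      = (S : H →ₗ[ℂ] H) ∘ₗ (T : H →ₗ[ℂ] H) := fun _ _ => rfl
  obtain ⟨_, _, hadd1⟩ := aInd_comp (Sφ : H →ₗ[ℂ] H) (A : H →ₗ[ℂ] H) fdkSφ fdkA fdcSφ fdcA
  obtain ⟨_, _, hadd2⟩ := aInd_comp (Sψ : H →ₗ[ℂ] H) (B : H →ₗ[ℂ] H) fdkSψ fdkB fdcSψ fdcB
  obtain ⟨fdk5, fdc5, hadd3⟩ := aInd_comp (Sψ : H →ₗ[ℂ] H) (Sφ : H →ₗ[ℂ] H) fdkSψ fdkSφ fdcSψ fdcSφ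
  have fdk5' : FiniteDimensional ℂ (LinearMap.ker ((Sψ * Sφ : H →L[ℂ] H) : H →ₗ[ℂ] H)) := fdk5
  have fdc5' : FiniteDimensional ℂ (H ⧸ LinearMap.range ((Sψ * Sφ : H →L[ℂ] H) : H →ₗ[ℂ] H)) := fdc5
  obtain ⟨_, _, hadd4⟩ := aInd_comp ((Sψ * Sφ : H →L[ℂ] H) : H →ₗ[ℂ] H) (Cc : H →ₗ[ℂ] H)
    fdk5' fdkC fdc5' fdcC
  have z1 : aInd ((Sφ : H →ₗ[ℂ] H) ∘ₗ (A : H →ₗ[ℂ] H)) = 0 := by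
    rw [← coeM, I1]
    exact (fred_one_add_compact K1 hK1).2.2
  have z2 : aInd ((Sψ : H →ₗ[ℂ] H) ∘ₗ (B : H →ₗ[ℂ] H)) = 0 := by
    rw [← coeM, I3]
    exact (fred_one_add_compact K3 hK3).2.2
  have z3 : aInd (((Sψ * Sφ : H →L[ℂ] H) : H →ₗ[ℂ] H) ∘ₗ (Cc : H →ₗ[ℂ] H)) = 0 := by
    rw [← coeM, I6]
    exact (fred_one_add_compact K6 hK6).2.2
  rw [← coeM Sψ Sφ] at hadd3
  -- translate the goal
  have hgA : (φ : H →L[ℂ] H) ∘L Pb + Ps = A := by rw [hs, hAdef]; rfl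
  have hgB : (ψ : H →L[ℂ] H) ∘L Pb + Ps = B := by rw [hs, hBdef]; rfl
  have hgC : ((ψ.trans φ : H ≃L[ℂ] H) : H →L[ℂ] H) ∘L Pb + Ps = Cc := by
    rw [hs, hCdef]
    have htr : ((ψ.trans φ : H ≃L[ℂ] H) : H →L[ℂ] H) = u * v := by
      ext x; simp [hudef, hvdef]
    rw [htr]
    rfl
  rw [hgA, hgB, hgC]
  show aInd (Cc : H →ₗ[ℂ] H) = aInd (A : H →ₗ[ℂ] H) + aInd (B : H →ₗ[ℂ] H)
  linarith [hadd1, hadd2, hadd3, hadd4, z1, z2, z3]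

end Assembly

end Aux

/-- ind~(φ) = ind(φP♭ + P♯) is a group homomorphism on GL(P♭, K):
ind~(φ ∘ ψ) = ind~(φ) + ind~(ψ). -/
theorem stmt3 {H : Type*} [NormedAddCommGroup H] [InnerProductSpace ℂ H] [CompleteSpace H]
    (Pb Ps : H →L[ℂ] H) (hPb : Pb ∘L Pb = Pb) (hsum : Pb + Ps = 1)
    (φ ψ : H ≃L[ℂ] H)
    (hφ : IsCompactOperator ((φ : H →L[ℂ] H) ∘L Pb - Pb ∘L (φ : H →L[ℂ] H)))
    (hψ : IsCompactOperator ((ψ : H →L[ℂ] H) ∘L Pb - Pb ∘L (ψ : H →L[ℂ] H))) :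
    opIndex (((ψ.trans φ : H ≃L[ℂ] H) : H →L[ℂ] H) ∘L Pb + Ps) =
      opIndex ((φ : H →L[ℂ] H) ∘L Pb + Ps) + opIndex ((ψ : H →L[ℂ] H) ∘L Pb + Ps) :=
  stmt3_aux Pb Ps hPb hsum φ ψ hφ hψ
end

section
/- Let H = H₁ ⊕ ⋯ ⊕ Hₙ be a direct sum decomposition of a Hilbert space into closed subspaces with projectors P₁, …, Pₙ, and let Ψ₁, …, Ψₙ be invertible bounded operators on H, each almost commuting with each projector Pⱼ (i.e. ΨᵢPⱼ − PⱼΨᵢ compact). Set Lᵢ = Ψᵢ(Hᵢ). Then the operator Ψ₁P₁ + Ψ₂P₂ + ⋯ + ΨₙPₙ : H → H is Fredholm and its index equals the index of the map ι : L₁ ⊕ ⋯ ⊕ Lₙ → H given by the sum of inclusions. -/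
open Submodule Module

set_option linter.unusedSectionVars false
set_option maxHeartbeats 1000000

section helpersSec
open Metric Filter Topology Set

namespace Stmt13Aux

variable {H : Type*} [NormedAddCommGroup H] [InnerProductSpace ℂ H] [CompleteSpace H]

lemma compact_mul_left {K : H →L[ℂ] H} (h : IsCompactOperator K) (g : H →L[ℂ] H) :
    IsCompactOperator (g * K : H →L[ℂ] H) := by
  have := h.clm_comp g
  rwa [show ⇑g ∘ ⇑K = ⇑(g * K) from rfl] at this

lemma compact_mul_right {K : H →L[ℂ] H} (h : IsCompactOperator K) (g : H →L[ℂ] H) :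
    IsCompactOperator (K * g : H →L[ℂ] H) := by
  have := h.comp_clm g
  rwa [show ⇑K ∘ ⇑g = ⇑(K * g) from rfl] at this

lemma compact_sum {ι : Type*} (s : Finset ι) (f : ι → (H →L[ℂ] H))
    (hf : ∀ i ∈ s, IsCompactOperator (f i)) :
    IsCompactOperator ((∑ i ∈ s, f i : H →L[ℂ] H)) := by
  classical
  induction s using Finset.induction with
  | empty => simpa using (isCompactOperator_zero : IsCompactOperator (fun _ : H => (0:H)))
  | insert a s hx ih =>
    rw [Finset.sum_insert hx]
    have h1 := hf _ (Finset.mem_insert_self _ _)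
    have h2 := ih fun i hi => hf i (Finset.mem_insert_of_mem hi)
    have h3 := h1.add h2
    have e : ⇑(f a) + ⇑(∑ i ∈ s, f i) = ⇑(f a + ∑ i ∈ s, f i) :=
      (ContinuousLinearMap.coe_add' _ _).symm
    rwa [e] at h3

/-- extract convergent subsequence of images of a bounded sequence under a compact operator -/
lemma compact_subseq {K : H →L[ℂ] H} (hK : IsCompactOperator K) {x : ℕ → H} {C : ℝ}
    (hx : ∀ n, ‖x n‖ ≤ C) :
    ∃ v : H, ∃ φ : ℕ → ℕ, StrictMono φ ∧ Tendsto (fun n => K (x (φ n))) atTop (𝓝 v) := by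
  obtain ⟨W, hW, hKW⟩ := hK.image_closedBall_subset_compact C
  have hmem : ∀ n, K (x n) ∈ W := fun n =>
    hKW ⟨x n, by simpa [Metric.mem_closedBall, dist_eq_norm] using hx n, rfl⟩
  obtain ⟨v, _, φ, hφ, hten⟩ := hW.tendsto_subseq hmem
  exact ⟨v, φ, hφ, hten⟩

end Stmt13Aux

namespace Stmt13Aux2
open Stmt13Aux
variable {H : Type*} [NormedAddCommGroup H] [InnerProductSpace ℂ H] [CompleteSpace H]

lemma fd_of_parametrix {T R : H →L[ℂ] H} (hK : IsCompactOperator (R * T - 1 : H →L[ℂ] H)) :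
    FiniteDimensional ℂ (LinearMap.ker (T : H →ₗ[ℂ] H)) := by
  set K : H →L[ℂ] H := R * T - 1 with hKdef
  have hker : ∀ x ∈ LinearMap.ker (T : H →ₗ[ℂ] H), K x = -x := by
    intro x hx
    have hx0 : T x = 0 := hx
    simp [hKdef, ContinuousLinearMap.sub_apply, ContinuousLinearMap.mul_apply, hx0]
  obtain ⟨W, hW, hKW⟩ := hK.image_closedBall_subset_compact 1
  set B : Set H := (LinearMap.ker (T : H →ₗ[ℂ] H) : Set H) ∩ Metric.closedBall 0 1 with hBdef
  have hBW : B ⊆ (fun x => -x) '' W := by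
    rintro x ⟨hx1, hx2⟩
    exact ⟨K x, hKW ⟨x, hx2, rfl⟩, by rw [hker x hx1]; simp⟩
  have hBclosed : IsClosed B :=
    (ContinuousLinearMap.isClosed_ker T).inter Metric.isClosed_closedBall
  have hBcompact : IsCompact B :=
    ((hW.image continuous_neg)).of_isClosed_subset hBclosed hBW
  have himg : Subtype.val '' (Metric.closedBall (0 : LinearMap.ker (T : H →ₗ[ℂ] H)) 1) = B := by
    ext x
    constructor
    · rintro ⟨y, hy, rfl⟩
      exact ⟨y.2, by simpa [Metric.mem_closedBall, dist_eq_norm] using hy⟩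
    · rintro ⟨hx1, hx2⟩
      exact ⟨⟨x, hx1⟩, by simpa [Metric.mem_closedBall, dist_eq_norm,
        Submodule.norm_coe] using hx2, rfl⟩
  have hcpt : IsCompact (Metric.closedBall (0 : LinearMap.ker (T : H →ₗ[ℂ] H)) 1) := by
    rw [Topology.IsEmbedding.isCompact_iff Topology.IsEmbedding.subtypeVal, himg]
    exact hBcompact
  exact FiniteDimensional.of_isCompact_closedBall₀ ℂ one_pos hcpt

lemma infDist_sub_mem (N : Submodule ℂ H) {k : H} (hk : k ∈ N) (x : H) :
    Metric.infDist (x - k) (N : Set H) = Metric.infDist x (N : Set H) := by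
  have himg : (fun y => y - k) '' (N : Set H) = (N : Set H) := by
    ext y
    constructor
    · rintro ⟨z, hz, rfl⟩; exact N.sub_mem hz hk
    · intro hy; exact ⟨y + k, N.add_mem hy hk, add_sub_cancel_right y k⟩
  have hiso : Isometry (fun y : H => y - k) :=
    Isometry.of_dist_eq fun a b => by simp [dist_eq_norm, sub_sub_sub_cancel_right]
  calc Metric.infDist (x - k) (N : Set H)
      = Metric.infDist ((fun y => y - k) x) ((fun y => y - k) '' (N : Set H)) := by rw [himg]
    _ = Metric.infDist x (N : Set H) := Metric.infDist_image hiso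

open scoped Pointwise in
lemma infDist_smul (N : Submodule ℂ H) {c : ℂ} (hc : c ≠ 0) (x : H) :
    Metric.infDist (c • x) (N : Set H) = ‖c‖ * Metric.infDist x (N : Set H) := by
  have himg : c • (N : Set H) = (N : Set H) := by
    ext y
    constructor
    · rintro ⟨z, hz, rfl⟩; exact N.smul_mem c hz
    · intro hy
      exact ⟨c⁻¹ • y, N.smul_mem _ hy, by simp [smul_smul, mul_inv_cancel₀ hc]⟩
  conv_lhs => rw [← himg]
  exact infDist_smul₀ hc _ x

/-- the key lower bound: distance to kernel is controlled by the norm of the image. -/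
lemma exists_bound {T R : H →L[ℂ] H} (hK : IsCompactOperator (R * T - 1 : H →L[ℂ] H)) :
    ∃ c : ℝ, ∀ x : H, Metric.infDist x (LinearMap.ker (T : H →ₗ[ℂ] H) : Set H) ≤ c * ‖T x‖ := by
  set N := LinearMap.ker (T : H →ₗ[ℂ] H)
  have hne : (N : Set H).Nonempty := ⟨0, N.zero_mem⟩
  by_contra hcon
  push_neg at hcon
  -- for each n, pick xₙ with infDist xₙ N > (n+1) ‖T xₙ‖
  have hsel : ∀ n : ℕ, ∃ x : H,
      ((n : ℝ) + 1) * ‖T x‖ < Metric.infDist x (N : Set H) := by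
    intro n
    obtain ⟨x, hx⟩ := hcon ((n : ℝ) + 1)
    exact ⟨x, hx⟩
  choose x hx using hsel
  -- normalize
  have hd : ∀ n, 0 < Metric.infDist (x n) (N : Set H) := by
    intro n
    refine lt_of_le_of_lt ?_ (hx n)
    positivity
  have hklt : ∀ n, ∃ k ∈ (N : Set H), dist (x n) k < 2 * Metric.infDist (x n) (N : Set H) := by
    intro n
    exact (Metric.infDist_lt_iff hne).1 (by linarith [hd n])
  choose k hk hkd using hklt
  set d : ℕ → ℝ := fun n => Metric.infDist (x n) (N : Set H)
  set u : ℕ → H := fun n => ((d n : ℂ))⁻¹ • (x n - k n)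
  have hdC : ∀ n, (d n : ℂ) ≠ 0 := fun n => by
    simp only [ne_eq, Complex.ofReal_eq_zero]
    exact (hd n).ne'
  have hdist : ∀ n, ‖x n - k n‖ < 2 * d n := fun n => by
    have := hkd n; rwa [dist_eq_norm] at this
  have hnormu : ∀ n, ‖u n‖ ≤ 2 := by
    intro n
    have h1 : ‖u n‖ = (d n)⁻¹ * ‖x n - k n‖ := by
      simp [u, norm_smul, abs_of_pos (hd n), show (0:ℝ) ≤ d n from (hd n).le]
    rw [h1]
    rw [inv_mul_le_iff₀ (hd n)]
    linarith [hdist n]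
  have hinf : ∀ n, Metric.infDist (u n) (N : Set H) = 1 := by
    intro n
    have h1 : Metric.infDist (u n) (N : Set H)
        = ‖((d n : ℂ))⁻¹‖ * Metric.infDist (x n - k n) (N : Set H) :=
      infDist_smul N (inv_ne_zero (hdC n)) _
    rw [h1, infDist_sub_mem N (hk n)]
    simp [abs_of_pos (hd n)]
    rw [abs_of_pos (show (0:ℝ) < d n from hd n)]
    exact inv_mul_cancel₀ (hd n).ne'
  have hTu : ∀ n, ‖T (u n)‖ ≤ 1 / ((n : ℝ) + 1) := by
    intro n
    have h1 : T (u n) = ((d n : ℂ))⁻¹ • (T (x n)) := by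
      have hkk : T (k n) = 0 := hk n
      simp [u, map_smul, map_sub, hkk]
    have h2 : ‖T (u n)‖ = (d n)⁻¹ * ‖T (x n)‖ := by
      rw [h1]; simp [norm_smul, abs_of_pos (hd n), show (0:ℝ) ≤ d n from (hd n).le]
    have hn1 : (0:ℝ) < (n : ℝ) + 1 := by positivity
    have h3 : ‖T (x n)‖ ≤ d n / ((n : ℝ) + 1) := by
      rw [le_div_iff₀ hn1]
      nlinarith [(hx n).le]
    rw [h2]
    calc (d n)⁻¹ * ‖T (x n)‖ ≤ (d n)⁻¹ * (d n / ((n : ℝ) + 1)) :=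
          mul_le_mul_of_nonneg_left h3 (inv_nonneg.2 (hd n).le)
      _ = 1 / ((n : ℝ) + 1) := by
          rw [div_eq_mul_inv, ← mul_assoc, inv_mul_cancel₀ (hd n).ne', one_mul, one_div]
  have hTu0 : Filter.Tendsto (fun n => T (u n)) Filter.atTop (nhds 0) := by
    rw [tendsto_zero_iff_norm_tendsto_zero]
    apply squeeze_zero (fun n => norm_nonneg _) hTu
    exact tendsto_one_div_add_atTop_nhds_zero_nat
  obtain ⟨v, φ, hφ, hKu⟩ := compact_subseq hK hnormu
  set K : H →L[ℂ] H := R * T - 1 with hKdef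
  have huv : Filter.Tendsto (fun n => u (φ n)) Filter.atTop (nhds (-v)) := by
    have h1 : Filter.Tendsto (fun n => R (T (u (φ n)))) Filter.atTop (nhds 0) := by
      have := (R.continuous.tendsto 0).comp (hTu0.comp hφ.tendsto_atTop)
      simpa [Function.comp_def] using this
    have h2 : ∀ n, u (φ n) = R (T (u (φ n))) - K (u (φ n)) := by
      intro n; simp [hKdef, ContinuousLinearMap.sub_apply, ContinuousLinearMap.mul_apply]
    have h3 := h1.sub hKu
    rw [show (0 : H) - v = -v by abel] at h3
    exact h3.congr (fun n => (h2 n).symm)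
  have hvN : -v ∈ (N : Set H) := by
    have h1 : Filter.Tendsto (fun n => T (u (φ n))) Filter.atTop (nhds (T (-v))) :=
      (T.continuous.tendsto _).comp huv
    have h2 : Filter.Tendsto (fun n => T (u (φ n))) Filter.atTop (nhds 0) :=
      hTu0.comp hφ.tendsto_atTop
    have : T (-v) = 0 := tendsto_nhds_unique h1 h2
    exact this
  have hdist0 : Filter.Tendsto (fun n => dist (u (φ n)) (-v)) Filter.atTop (nhds 0) :=
    tendsto_iff_dist_tendsto_zero.1 huv
  have : ∀ n, (1:ℝ) ≤ dist (u (φ n)) (-v) := fun n => by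
    rw [← hinf (φ n)]
    exact Metric.infDist_le_dist_of_mem hvN
  have hge : (1:ℝ) ≤ 0 := ge_of_tendsto hdist0 (Filter.Eventually.of_forall this)
  linarith

lemma closed_range {T R : H →L[ℂ] H} (hK : IsCompactOperator (R * T - 1 : H →L[ℂ] H)) :
    IsClosed (LinearMap.range (T : H →ₗ[ℂ] H) : Set H) := by
  obtain ⟨c, hc⟩ := exists_bound hK
  set N := LinearMap.ker (T : H →ₗ[ℂ] H)
  have hne : (N : Set H).Nonempty := ⟨0, N.zero_mem⟩
  refine isClosed_of_closure_subset ?_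
  intro y hy
  obtain ⟨w, hw, hwy⟩ := mem_closure_iff_seq_limit.1 hy
  have hw' : ∀ n, ∃ x, T x = w n := fun n => hw n
  choose x hxw using hw'
  have hB : ∃ B : ℝ, ∀ n, ‖w n‖ ≤ B := by
    obtain ⟨B, hB⟩ := (hwy.norm).bddAbove_range
    exact ⟨B, fun n => hB ⟨n, rfl⟩⟩
  obtain ⟨B, hB⟩ := hB
  set D : ℝ := max c 0 * max B 0 + 1 with hD
  have hinfD : ∀ n, Metric.infDist (x n) (N : Set H) < D := by
    intro n
    have h1 := hc (x n)
    have h2 : c * ‖T (x n)‖ ≤ max c 0 * max B 0 := by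
      rw [hxw n]
      calc c * ‖w n‖ ≤ max c 0 * ‖w n‖ :=
            mul_le_mul_of_nonneg_right (le_max_left c 0) (norm_nonneg _)
        _ ≤ max c 0 * max B 0 := by
            apply mul_le_mul_of_nonneg_left ((hB n).trans (le_max_left B 0)) (le_max_right c 0)
    rw [hD]; linarith
  have hsel : ∀ n, ∃ k ∈ (N : Set H), dist (x n) k < D := fun n =>
    (Metric.infDist_lt_iff hne).1 (hinfD n)
  choose k hkN hkd using hsel
  set x' : ℕ → H := fun n => x n - k n with hx'
  have hTx' : ∀ n, T (x' n) = w n := by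
    intro n
    have hkk : T (k n) = 0 := hkN n
    simp [hx', map_sub, hkk, hxw n]
  have hx'bd : ∀ n, ‖x' n‖ ≤ D := fun n => by
    have := hkd n; rw [dist_eq_norm] at this; exact this.le
  obtain ⟨v, φ, hφ, hKx⟩ := compact_subseq hK hx'bd
  set K : H →L[ℂ] H := R * T - 1 with hKdef
  refine ⟨R y - v, ?_⟩
  have h1 : Filter.Tendsto (fun n => R (w (φ n))) Filter.atTop (nhds (R y)) :=
    (R.continuous.tendsto y).comp (hwy.comp hφ.tendsto_atTop)
  have h2 : ∀ n, x' (φ n) = R (w (φ n)) - K (x' (φ n)) := by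
    intro n
    simp [hKdef, ContinuousLinearMap.sub_apply, ContinuousLinearMap.mul_apply, hTx' (φ n)]
  have h3 : Filter.Tendsto (fun n => x' (φ n)) Filter.atTop (nhds (R y - v)) :=
    (h1.sub hKx).congr (fun n => (h2 n).symm)
  have h4 : Filter.Tendsto (fun n => T (x' (φ n))) Filter.atTop (nhds (T (R y - v))) :=
    (T.continuous.tendsto _).comp h3
  have h5 : Filter.Tendsto (fun n => T (x' (φ n))) Filter.atTop (nhds y) := by
    have := hwy.comp hφ.tendsto_atTop
    exact this.congr (fun n => (hTx' (φ n)).symm)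
  exact tendsto_nhds_unique h4 h5

end Stmt13Aux2

namespace Stmt13Aux3
open Stmt13Aux Stmt13Aux2
variable {H : Type*} [NormedAddCommGroup H] [InnerProductSpace ℂ H] [CompleteSpace H]

local notation "⟪" x ", " y "⟫" => @inner ℂ _ _ x y

/-- Schauder's theorem in Hilbert space: the adjoint of a compact operator is compact. -/
lemma adjoint_compact {K : H →L[ℂ] H} (hK : IsCompactOperator K) :
    IsCompactOperator (ContinuousLinearMap.adjoint K) := by
  set A : H →L[ℂ] H := ContinuousLinearMap.adjoint K with hA
  set B : H →L[ℂ] H := K * A with hB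
  have hBc : IsCompactOperator B := compact_mul_right hK A
  have key : ∀ u : H, ‖A u‖ ^ 2 ≤ ‖u‖ * ‖B u‖ := by
    intro u
    have h1 : (‖A u‖ : ℝ) ^ 2 = RCLike.re ⟪A u, A u⟫ := (inner_self_eq_norm_sq (A u)).symm
    have h2 : ⟪A u, A u⟫ = ⟪u, B u⟫ := by
      rw [hA, ContinuousLinearMap.adjoint_inner_left]
      rfl
    rw [h1, h2]
    exact re_inner_le_norm u (B u)
  have hseq : IsSeqCompact (closure (A '' Metric.closedBall 0 1)) := by
    intro c hc
    have happrox : ∀ n : ℕ, ∃ z ∈ A '' Metric.closedBall 0 1,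
        dist (c n) z < 1 / ((n : ℝ) + 1) := by
      intro n
      exact Metric.mem_closure_iff.1 (hc n) _ (by positivity)
    choose z hz hzd using happrox
    choose y hy hyz using hz
    have hybd : ∀ n, ‖y n‖ ≤ 1 := fun n => by
      have := hy n; rwa [Metric.mem_closedBall, dist_zero_right] at this
    obtain ⟨v, φ, hφ, hBy⟩ := compact_subseq hBc hybd
    have hcauchy : CauchySeq (fun n => A (y (φ n))) := by
      rw [Metric.cauchySeq_iff]
      intro ε hε
      have hBcau : CauchySeq (fun n => B (y (φ n))) := hBy.cauchySeq
      rw [Metric.cauchySeq_iff] at hBcau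
      obtain ⟨M, hM⟩ := hBcau (ε ^ 2 / 2) (by positivity)
      refine ⟨M, fun p hp q hq => ?_⟩
      have h2 : dist (A (y (φ p))) (A (y (φ q))) = ‖A (y (φ p) - y (φ q))‖ := by
        rw [dist_eq_norm, ← map_sub]
      have h3 : ‖y (φ p) - y (φ q)‖ ≤ 2 := by
        calc ‖y (φ p) - y (φ q)‖ ≤ ‖y (φ p)‖ + ‖y (φ q)‖ := norm_sub_le _ _
          _ ≤ 2 := by linarith [hybd (φ p), hybd (φ q)]
      have h4 : ‖B (y (φ p) - y (φ q))‖ = dist (B (y (φ p))) (B (y (φ q))) := by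
        rw [dist_eq_norm, ← map_sub]
      have h5 := key (y (φ p) - y (φ q))
      have h6 := hM p hp q hq
      have h7 : dist (A (y (φ p))) (A (y (φ q))) ^ 2 ≤ 2 * dist (B (y (φ p))) (B (y (φ q))) := by
        rw [h2, ← h4]
        calc ‖A (y (φ p) - y (φ q))‖ ^ 2 ≤ ‖y (φ p) - y (φ q)‖ * ‖B (y (φ p) - y (φ q))‖ := h5
          _ ≤ 2 * ‖B (y (φ p) - y (φ q))‖ :=
              mul_le_mul_of_nonneg_right h3 (norm_nonneg _)
      nlinarith [dist_nonneg (x := A (y (φ p))) (y := A (y (φ q))), hε]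
    obtain ⟨a, ha⟩ := cauchySeq_tendsto_of_complete hcauchy
    refine ⟨a, ?_, φ, hφ, ?_⟩
    · exact mem_closure_of_tendsto ha
        (Filter.Eventually.of_forall fun n => Set.mem_image_of_mem _ (hy (φ n)))
    · have hdz : Filter.Tendsto (fun n => dist (c (φ n)) (A (y (φ n)))) Filter.atTop (nhds 0) := by
        apply squeeze_zero (fun n => dist_nonneg)
          (g := fun n : ℕ => 1 / ((n : ℝ) + 1)) ?_ tendsto_one_div_add_atTop_nhds_zero_nat
        intro n
        have h8 : dist (c (φ n)) (A (y (φ n))) < 1 / ((φ n : ℝ) + 1) := by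
          rw [hyz (φ n)]; exact hzd (φ n)
        have h9 : (1 : ℝ) / ((φ n : ℝ) + 1) ≤ 1 / ((n : ℝ) + 1) := by
          apply one_div_le_one_div_of_le (by positivity)
          have h10 : ((n : ℕ) : ℝ) ≤ ((φ n : ℕ) : ℝ) := Nat.cast_le.2 hφ.le_apply
          linarith
        linarith
      exact Filter.Tendsto.congr_dist ha (by simpa [dist_comm] using hdz)
  have hC : IsCompact (closure (A '' Metric.closedBall 0 1)) := hseq.isCompact
  exact ⟨closure (A '' Metric.closedBall 0 1), hC,
    Filter.mem_of_superset (Metric.closedBall_mem_nhds 0 one_pos)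
      (fun x hx => subset_closure ⟨x, hx, rfl⟩)⟩

lemma orthogonal_range_eq_ker_adjoint (T : H →L[ℂ] H) :
    (LinearMap.range (T : H →ₗ[ℂ] H))ᗮ = LinearMap.ker ((ContinuousLinearMap.adjoint T : H →L[ℂ] H) : H →ₗ[ℂ] H) := by
  ext v
  rw [Submodule.mem_orthogonal', LinearMap.mem_ker]
  constructor
  · intro h
    have h1 : ⟪ContinuousLinearMap.adjoint T v, ContinuousLinearMap.adjoint T v⟫ = 0 := by
      rw [ContinuousLinearMap.adjoint_inner_left]
      exact h _ ⟨ContinuousLinearMap.adjoint T v, rfl⟩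
    exact inner_self_eq_zero.1 h1
  · rintro h u ⟨w, rfl⟩
    calc ⟪v, T w⟫ = ⟪ContinuousLinearMap.adjoint T v, w⟫ :=
          (ContinuousLinearMap.adjoint_inner_left T w v).symm
      _ = 0 := by rw [show ContinuousLinearMap.adjoint T v = 0 from h, inner_zero_left]

lemma fd_coker {T R : H →L[ℂ] H} (hK' : IsCompactOperator (T * R - 1 : H →L[ℂ] H))
    (hclosed : IsClosed (LinearMap.range (T : H →ₗ[ℂ] H) : Set H)) :
    FiniteDimensional ℂ (H ⧸ LinearMap.range (T : H →ₗ[ℂ] H)) := by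
  set T' : H →L[ℂ] H := ContinuousLinearMap.adjoint T with hT'
  have hadj : (ContinuousLinearMap.adjoint R) * T' - 1
      = ContinuousLinearMap.adjoint (T * R - 1) := by
    rw [map_sub]
    congr 1
    · exact (ContinuousLinearMap.adjoint_comp T R).symm
    · rw [ContinuousLinearMap.one_def]
      exact (ContinuousLinearMap.adjoint_id).symm
  have hK'' : IsCompactOperator ((ContinuousLinearMap.adjoint R) * T' - 1 : H →L[ℂ] H) := by
    rw [hadj]; exact adjoint_compact hK'
  have hfd : FiniteDimensional ℂ (LinearMap.ker (T' : H →ₗ[ℂ] H)) := fd_of_parametrix hK''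
  have horth := orthogonal_range_eq_ker_adjoint T
  haveI : CompleteSpace (LinearMap.range (T : H →ₗ[ℂ] H)) := hclosed.completeSpace_coe
  have hcompl : IsCompl (LinearMap.range (T : H →ₗ[ℂ] H)) (LinearMap.range (T : H →ₗ[ℂ] H))ᗮ :=
    Submodule.isCompl_orthogonal_of_hasOrthogonalProjection
  have e := Submodule.quotientEquivOfIsCompl _ _ hcompl
  haveI : FiniteDimensional ℂ ((LinearMap.range (T : H →ₗ[ℂ] H))ᗮ : Submodule ℂ H) := by
    rw [horth]; exact hfd
  exact Module.Finite.equiv e.symm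

end Stmt13Aux3

namespace Stmt13Aux4
open Stmt13Aux
variable {H : Type*} [NormedAddCommGroup H] [InnerProductSpace ℂ H] [CompleteSpace H]

lemma compact_add {f g : H →L[ℂ] H} (hf : IsCompactOperator f) (hg : IsCompactOperator g) :
    IsCompactOperator ((f + g : H →L[ℂ] H)) := by
  have h := hf.add hg
  have e : ⇑f + ⇑g = ⇑(f + g) := (ContinuousLinearMap.coe_add' f g).symm
  rwa [e] at h

lemma compact_neg' {f : H →L[ℂ] H} (h : IsCompactOperator f) :
    IsCompactOperator ((-f : H →L[ℂ] H)) := by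
  have h2 := h.neg
  have e : -⇑f = ⇑(-f) := by ext x; simp
  rwa [e] at h2

lemma compact_zero' : IsCompactOperator ((0 : H →L[ℂ] H)) := by
  have e : ⇑(0 : H →L[ℂ] H) = (fun _ : H => (0 : H)) := by ext x; simp
  rw [e]
  exact isCompactOperator_zero

lemma offdiag_compact {p q u u' v : H →L[ℂ] H}
    (h1 : u' * u = 1) (h2 : u * u' = 1) (hpq : p * q = 0)
    (hk1 : IsCompactOperator ((u * p - p * u : H →L[ℂ] H)))
    (hk2 : IsCompactOperator ((v * p - p * v : H →L[ℂ] H))) :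
    IsCompactOperator ((p * u' * v * q : H →L[ℂ] H)) := by
  have key : u' * (u * p - p * u) * u' = p * u' - u' * p := by
    calc u' * (u * p - p * u) * u'
        = (u' * u) * p * u' - u' * p * (u * u') := by noncomm_ring
      _ = p * u' - u' * p := by rw [h1, h2]; noncomm_ring
  have hid : p * u' * v * q
      = (u' * (u * p - p * u) * u') * (v * q) + u' * ((p * v - v * p) * q) := by
    rw [key]
    have h3 : p * u' * v * q
        = (p * u' - u' * p) * (v * q) + u' * ((p * v - v * p) * q) + u' * v * (p * q) := by
      noncomm_ring
    rw [h3, hpq]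
    noncomm_ring
  rw [hid]
  apply compact_add
  · exact compact_mul_right (compact_mul_left (compact_mul_right hk1 u') u') (v * q)
  · have e : p * v - v * p = -(v * p - p * v) := by noncomm_ring
    have hk2' : IsCompactOperator ((p * v - v * p : H →L[ℂ] H)) := by
      rw [e]; exact compact_neg' hk2
    exact compact_mul_left (compact_mul_right hk2' q) u'

end Stmt13Aux4

end helpersSec

/-- for a fan Lᵢ = Ψᵢ(Hᵢ) obtained from a direct sum decomposition
given by projectors Pᵢ and invertibles Ψᵢ almost commuting with each Pⱼ, the
operator ∑ᵢ ΨᵢPᵢ is Fredholm and its index equals the index of the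
sum-of-inclusions map ι : L₁ ⊕ ⋯ ⊕ Lₙ → H. -/
theorem stmt13 {H : Type*} [NormedAddCommGroup H] [InnerProductSpace ℂ H] [CompleteSpace H]
    (n : ℕ) (P : Fin n → (H →L[ℂ] H)) (Ψ : Fin n → (H ≃L[ℂ] H))
    (hsum : ∑ i, P i = 1)
    (horth : ∀ i j, P i ∘L P j = if i = j then P i else 0)
    (hcomm : ∀ i j, IsCompactOperator
      (((Ψ i : H →L[ℂ] H) ∘L P j - P j ∘L (Ψ i : H →L[ℂ] H) : H →L[ℂ] H)))
    (L : Fin n → Submodule ℂ H)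
    (hL : ∀ i, L i = (LinearMap.range (P i : H →ₗ[ℂ] H)).map
      (((Ψ i : H →L[ℂ] H)) : H →ₗ[ℂ] H))
    (ι : (∀ i : Fin n, ↥(L i)) →L[ℂ] H)
    (hι : ι = ∑ i, (L i).subtypeL ∘L ContinuousLinearMap.proj i) :
    IsFredholmOp (∑ i, (Ψ i : H →L[ℂ] H) ∘L P i) ∧
      IsFredholmOp ι ∧
      opIndex (∑ i, (Ψ i : H →L[ℂ] H) ∘L P i) = opIndex ι := by
  classical
  open Stmt13Aux Stmt13Aux2 Stmt13Aux3 Stmt13Aux4 in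
  set T : H →L[ℂ] H := ∑ i, (Ψ i : H →L[ℂ] H) ∘L P i with hT
  set R : H →L[ℂ] H := ∑ i, P i ∘L ((Ψ i).symm : H →L[ℂ] H) with hR
  have hcomp_mul : ∀ (f g : H →L[ℂ] H), f ∘L g = f * g := fun f g => rfl
  have hinv1 : ∀ i, ((Ψ i).symm : H →L[ℂ] H) * (Ψ i : H →L[ℂ] H) = 1 := fun i => by
    ext x; simp
  have hinv2 : ∀ i, (Ψ i : H →L[ℂ] H) * ((Ψ i).symm : H →L[ℂ] H) = 1 := fun i => by
    ext x; simp
  have horth' : ∀ i j, P i * P j = if i = j then P i else 0 := fun i j => horth i j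
  have hcomm' : ∀ i j, IsCompactOperator
      (((Ψ i : H →L[ℂ] H) * P j - P j * (Ψ i : H →L[ℂ] H) : H →L[ℂ] H)) := fun i j => hcomm i j
  -- the diagonal-sum representation of 1
  have hone : (1 : H →L[ℂ] H) = ∑ i, ∑ j, (if i = j then P i else 0) := by
    rw [← hsum]
    refine Finset.sum_congr rfl fun i _ => ?_
    rw [Finset.sum_ite_eq]
    simp
  -- R * T - 1 is compact
  have hRT : IsCompactOperator ((R * T - 1 : H →L[ℂ] H)) := by
    have hexp : R * T - 1 = ∑ i, ∑ j,
        ((P i * ((Ψ i).symm : H →L[ℂ] H)) * ((Ψ j : H →L[ℂ] H) * P j)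
          - (if i = j then P i else 0)) := by
      have h1 : R * T = ∑ i, ∑ j,
          (P i * ((Ψ i).symm : H →L[ℂ] H)) * ((Ψ j : H →L[ℂ] H) * P j) := by
        rw [hR, hT, Finset.sum_mul_sum]
        rfl
      rw [h1, hone]
      rw [← Finset.sum_sub_distrib]
      refine Finset.sum_congr rfl fun i _ => ?_
      rw [← Finset.sum_sub_distrib]
    rw [hexp]
    apply compact_sum
    intro i _
    apply compact_sum
    intro j _
    by_cases hij : i = j
    · subst hij
      have : (P i * ((Ψ i).symm : H →L[ℂ] H)) * ((Ψ i : H →L[ℂ] H) * P i)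
          - (if i = i then P i else 0) = 0 := by
        rw [if_pos rfl]
        have h2 : (P i * ((Ψ i).symm : H →L[ℂ] H)) * ((Ψ i : H →L[ℂ] H) * P i)
            = P i * (((Ψ i).symm : H →L[ℂ] H) * (Ψ i : H →L[ℂ] H)) * P i := by noncomm_ring
        rw [h2, hinv1 i, mul_one, horth' i i, if_pos rfl, sub_self]
      rw [this]
      exact compact_zero'
    · have h2 : (P i * ((Ψ i).symm : H →L[ℂ] H)) * ((Ψ j : H →L[ℂ] H) * P j)
          - (if i = j then P i else 0)
          = P i * ((Ψ i).symm : H →L[ℂ] H) * (Ψ j : H →L[ℂ] H) * P j := by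
        rw [if_neg hij, sub_zero]; noncomm_ring
      rw [h2]
      have hpq : P i * P j = 0 := by rw [horth' i j, if_neg hij]
      exact offdiag_compact (hinv1 i) (hinv2 i) hpq (hcomm' i i) (hcomm' j i)
  -- T * R - 1 is compact
  have hTR : IsCompactOperator ((T * R - 1 : H →L[ℂ] H)) := by
    have hexp : T * R - 1 = ∑ i, ∑ j,
        (((Ψ i : H →L[ℂ] H) * P i) * (P j * ((Ψ j).symm : H →L[ℂ] H))
          - (if i = j then P i else 0)) := by
      have h1 : T * R = ∑ i, ∑ j,
          ((Ψ i : H →L[ℂ] H) * P i) * (P j * ((Ψ j).symm : H →L[ℂ] H)) := by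
        rw [hR, hT, Finset.sum_mul_sum]
        rfl
      rw [h1, hone]
      rw [← Finset.sum_sub_distrib]
      refine Finset.sum_congr rfl fun i _ => ?_
      rw [← Finset.sum_sub_distrib]
    rw [hexp]
    apply compact_sum
    intro i _
    apply compact_sum
    intro j _
    by_cases hij : i = j
    · subst hij
      have h2 : ((Ψ i : H →L[ℂ] H) * P i) * (P i * ((Ψ i).symm : H →L[ℂ] H))
          - (if i = i then P i else 0)
          = ((Ψ i : H →L[ℂ] H) * P i - P i * (Ψ i : H →L[ℂ] H)) * ((Ψ i).symm : H →L[ℂ] H) := by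
        rw [if_pos rfl]
        have h3 : ((Ψ i : H →L[ℂ] H) * P i) * (P i * ((Ψ i).symm : H →L[ℂ] H))
            = (Ψ i : H →L[ℂ] H) * (P i * P i) * ((Ψ i).symm : H →L[ℂ] H) := by noncomm_ring
        rw [h3, horth' i i, if_pos rfl]
        have h4 : ((Ψ i : H →L[ℂ] H) * P i - P i * (Ψ i : H →L[ℂ] H)) * ((Ψ i).symm : H →L[ℂ] H)
            = (Ψ i : H →L[ℂ] H) * P i * ((Ψ i).symm : H →L[ℂ] H)
              - P i * ((Ψ i : H →L[ℂ] H) * ((Ψ i).symm : H →L[ℂ] H)) := by noncomm_ring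
        rw [h4, hinv2 i, mul_one]
      rw [h2]
      exact compact_mul_right (hcomm' i i) _
    · have h2 : ((Ψ i : H →L[ℂ] H) * P i) * (P j * ((Ψ j).symm : H →L[ℂ] H))
          - (if i = j then P i else 0) = 0 := by
        rw [if_neg hij, sub_zero]
        have h3 : ((Ψ i : H →L[ℂ] H) * P i) * (P j * ((Ψ j).symm : H →L[ℂ] H))
            = (Ψ i : H →L[ℂ] H) * (P i * P j) * ((Ψ j).symm : H →L[ℂ] H) := by noncomm_ring
        rw [h3, horth' i j, if_neg hij]
        noncomm_ring
      rw [h2]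
      exact compact_zero'
  -- Fredholm data for T
  have hTk : FiniteDimensional ℂ (LinearMap.ker (T : H →ₗ[ℂ] H)) := Stmt13Aux2.fd_of_parametrix hRT
  have hTcl : IsClosed (LinearMap.range (T : H →ₗ[ℂ] H) : Set H) := Stmt13Aux2.closed_range hRT
  have hTco : FiniteDimensional ℂ (H ⧸ LinearMap.range (T : H →ₗ[ℂ] H)) := Stmt13Aux3.fd_coker hTR hTcl
  -- the subspaces L i are closed
  have hPP : ∀ i x, P i (P i x) = P i x := fun i x => by
    have h := ContinuousLinearMap.ext_iff.1 (horth i i) x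
    rw [if_pos rfl] at h
    simpa using h
  have hrange_closed : ∀ i, IsClosed ((LinearMap.range (P i : H →ₗ[ℂ] H) : Submodule ℂ H) : Set H) := by
    intro i
    have he : LinearMap.range (P i : H →ₗ[ℂ] H) = LinearMap.ker ((P i - 1 : H →L[ℂ] H) : H →ₗ[ℂ] H) := by
      ext x
      constructor
      · rintro ⟨y, rfl⟩
        show (P i - 1) (P i y) = 0
        simp [ContinuousLinearMap.sub_apply, hPP i y]
      · intro hx
        have h1 : P i x - x = 0 := by
          simpa [ContinuousLinearMap.sub_apply] using hx
        exact ⟨x, by rw [sub_eq_zero] at h1; exact h1⟩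
    rw [he]
    exact ContinuousLinearMap.isClosed_ker _
  have hLclosed : ∀ i, IsClosed ((L i : Set H)) := by
    intro i
    rw [hL i, Submodule.map_coe]
    exact ((Ψ i).toHomeomorph.isClosed_image).2 (hrange_closed i)
  haveI : ∀ i, CompleteSpace (L i) := fun i => (hLclosed i).completeSpace_coe
  have hmem : ∀ i x, (Ψ i) (P i x) ∈ L i := fun i x => by
    rw [hL i]; exact ⟨P i x, LinearMap.mem_range_self _ x, rfl⟩
  set S : H →L[ℂ] (∀ i, L i) := ContinuousLinearMap.pi
    (fun i => ContinuousLinearMap.codRestrict ((Ψ i : H →L[ℂ] H) ∘L P i) (L i) (hmem i)) with hS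
  have hSapp : ∀ x i, ((S x i : H)) = (Ψ i) (P i x) := fun x i => rfl
  have hPx : ∀ x, ∑ i, P i x = x := fun x => by
    have h := ContinuousLinearMap.ext_iff.1 hsum x
    simpa [ContinuousLinearMap.sum_apply] using h
  have hSinj : LinearMap.ker (S : H →ₗ[ℂ] (∀ i, L i)) = ⊥ := by
    rw [LinearMap.ker_eq_bot']
    intro x hx
    have h1 : ∀ i, P i x = 0 := by
      intro i
      have h2 : ((S x i : H)) = 0 := by rw [show S x = 0 from hx]; rfl
      rw [hSapp] at h2
      have h3 : (Ψ i) (P i x) = (Ψ i) 0 := by simpa using h2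
      exact (Ψ i).injective h3
    rw [← hPx x]
    simp [h1]
  have hSsurj : LinearMap.range (S : H →ₗ[ℂ] (∀ i, L i)) = ⊤ := by
    rw [LinearMap.range_eq_top]
    intro y
    have hyi : ∀ i, ∃ w, (Ψ i) (P i w) = (y i : H) := by
      intro i
      have h2 : ((y i : H)) ∈ Submodule.map (((Ψ i : H →L[ℂ] H)) : H →ₗ[ℂ] H)
          (LinearMap.range (P i : H →ₗ[ℂ] H)) := by
        rw [← hL i]; exact (y i).2
      obtain ⟨z, hz, hzy⟩ := h2
      obtain ⟨w, hw⟩ := hz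
      exact ⟨w, by rw [show P i w = z from hw]; exact hzy⟩
    choose w hw using hyi
    refine ⟨∑ j, P j (w j), ?_⟩
    have hPz : ∀ i, P i (∑ j, P j (w j)) = P i (w i) := by
      intro i
      rw [map_sum]
      have h3 : ∀ j, P i (P j (w j)) = if i = j then P i (w i) else 0 := by
        intro j
        have h4 := ContinuousLinearMap.ext_iff.1 (horth i j) (w j)
        by_cases hij : i = j
        · subst hij
          rw [if_pos rfl] at h4 ⊢
          simpa using h4
        · rw [if_neg hij] at h4 ⊢
          simpa using h4
      rw [Finset.sum_congr rfl (fun j _ => h3 j), Finset.sum_ite_eq]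
      simp
    funext i
    apply Subtype.ext
    change ((S (∑ j, P j (w j)) i : H)) = y i
    rw [hSapp, hPz i, hw i]
  -- T = ι ∘L S
  have hTS : T = ι ∘L S := by
    ext x
    rw [hι]
    have h1 : T x = ∑ i, (Ψ i) (P i x) := by
      rw [hT]
      simp [ContinuousLinearMap.sum_apply]
    have h2 : (∑ i, (L i).subtypeL ∘L ContinuousLinearMap.proj i) (S x)
        = ∑ i, ((S x i : H)) := by
      simp [ContinuousLinearMap.sum_apply]
    rw [ContinuousLinearMap.comp_apply, h1, h2]
    exact Finset.sum_congr rfl fun i _ => (hSapp x i).symm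
  set eL : H ≃ₗ[ℂ] (∀ i, L i) := LinearEquiv.ofBijective (S : H →ₗ[ℂ] (∀ i, L i))
    ⟨LinearMap.ker_eq_bot.1 hSinj, LinearMap.range_eq_top.1 hSsurj⟩ with heL
  have hker : LinearMap.ker (T : H →ₗ[ℂ] H)
      = Submodule.comap (eL : H →ₗ[ℂ] (∀ i, L i)) (LinearMap.ker (ι : (∀ i : Fin n, ↥(L i)) →ₗ[ℂ] H)) := by
    rw [hTS]
    exact LinearMap.ker_comp _ _
  have eker : (LinearMap.ker (T : H →ₗ[ℂ] H) : Submodule ℂ H) ≃ₗ[ℂ] (LinearMap.ker (ι : (∀ i : Fin n, ↥(L i)) →ₗ[ℂ] H)) := by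
    rw [hker]
    exact LinearEquiv.ofSubmodule' eL (LinearMap.ker (ι : (∀ i : Fin n, ↥(L i)) →ₗ[ℂ] H))
  have hrange : LinearMap.range (T : H →ₗ[ℂ] H) = LinearMap.range (ι : (∀ i : Fin n, ↥(L i)) →ₗ[ℂ] H) := by
    rw [hTS]
    have h1 : LinearMap.range ((ι ∘L S : H →L[ℂ] H) : H →ₗ[ℂ] H)
        = Submodule.map (ι : _ →ₗ[ℂ] H) (LinearMap.range (S : H →ₗ[ℂ] (∀ i, L i))) := LinearMap.range_comp _ _
    rw [h1, hSsurj, Submodule.map_top]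
  haveI hιk : FiniteDimensional ℂ (LinearMap.ker (ι : (∀ i : Fin n, ↥(L i)) →ₗ[ℂ] H)) := Module.Finite.equiv eker
  have hιcl : IsClosed (LinearMap.range (ι : (∀ i : Fin n, ↥(L i)) →ₗ[ℂ] H) : Set H) := by
    rw [← hrange]; exact hTcl
  have hιco : FiniteDimensional ℂ (H ⧸ LinearMap.range (ι : (∀ i : Fin n, ↥(L i)) →ₗ[ℂ] H)) := by
    rw [← hrange]; exact hTco
  refine ⟨⟨hTk, hTcl, hTco⟩, ⟨hιk, hιcl, hιco⟩, ?_⟩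
  unfold opIndex
  rw [LinearEquiv.finrank_eq eker, hrange]
end

section
/- With the notation of a Fredholm fan (Lᵢ = Ψᵢ(Hᵢ), Ψᵢ almost commuting with all Pⱼ), the index of Ψ₁P₁ + ⋯ + ΨₙPₙ equals the sum ∑ᵢ ind(PᵢΨᵢ|_{Hᵢ} : Hᵢ → Hᵢ) = ∑ᵢ ind(Pᵢ|_{Lᵢ} : Lᵢ → Hᵢ). -/
open Submodule Module LinearMap

section Alg

variable {K V W U : Type*} [Field K] [AddCommGroup V] [Module K V]
  [AddCommGroup W] [Module K W] [AddCommGroup U] [Module K U]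

theorem findim_ext (S : Submodule K V) (h1 : FiniteDimensional K S)
    (h2 : FiniteDimensional K (V ⧸ S)) : FiniteDimensional K V := by
  have := (isNoetherian_iff_submodule_quotient S).mpr
    ⟨IsNoetherian.iff_fg.mpr h1, IsNoetherian.iff_fg.mpr h2⟩
  exact IsNoetherian.iff_fg.mp this

/-- `T.map S.mkQ ≃ T ⧸ (S ∩ T)` (used for quotient towers). -/
noncomputable def mapMkQEquiv (S T : Submodule K V) :
    (↥T ⧸ (S.comap T.subtype)) ≃ₗ[K] ↥(T.map S.mkQ) := by
  refine (Submodule.quotEquivOfEq _ _ ?_).trans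
    (LinearMap.quotKerEquivOfSurjective
      ((S.mkQ ∘ₗ T.subtype).codRestrict (T.map S.mkQ)
        (fun x => Submodule.mem_map_of_mem x.2)) ?_)
  · rw [LinearMap.ker_codRestrict, LinearMap.ker_comp, Submodule.ker_mkQ]
  · rintro ⟨y, t, ht, rfl⟩
    exact ⟨⟨t, ht⟩, rfl⟩

theorem findim_quot_tower (S T : Submodule K V) (h : S ≤ T)
    (h1 : FiniteDimensional K (↥T ⧸ (S.comap T.subtype)))
    (h2 : FiniteDimensional K (V ⧸ T)) : FiniteDimensional K (V ⧸ S) := by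
  refine findim_ext (T.map S.mkQ) ((mapMkQEquiv S T).finiteDimensional) ?_
  exact (Submodule.quotientQuotientEquivQuotient S T h).symm.finiteDimensional

theorem finrank_quot_tower (S T : Submodule K V) (h : S ≤ T)
    [FiniteDimensional K (V ⧸ S)] :
    finrank K (V ⧸ S) = finrank K (↥T ⧸ (S.comap T.subtype)) + finrank K (V ⧸ T) := by
  have h1 := Submodule.finrank_quotient_add_finrank (R := K) (M := V ⧸ S) (T.map S.mkQ)
  rw [(Submodule.quotientQuotientEquivQuotient S T h).finrank_eq,
    ← (mapMkQEquiv S T).finrank_eq] at h1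
  omega

theorem index_comp (f : U →ₗ[K] V) (g : V →ₗ[K] W)
    (hkf : FiniteDimensional K (ker f)) (hcf : FiniteDimensional K (V ⧸ range f))
    (hkg : FiniteDimensional K (ker g)) (hcg : FiniteDimensional K (W ⧸ range g)) :
    FiniteDimensional K (ker (g ∘ₗ f)) ∧ FiniteDimensional K (W ⧸ range (g ∘ₗ f)) ∧
    (finrank K (ker (g ∘ₗ f)) : ℤ) - finrank K (W ⧸ range (g ∘ₗ f))
      = ((finrank K (ker g) : ℤ) - finrank K (W ⧸ range g))
        + ((finrank K (ker f) : ℤ) - finrank K (V ⧸ range f)) := by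
  classical
  set R : Submodule K V := range f with hR
  set N : Submodule K V := ker g with hN
  haveI : FiniteDimensional K ↥N := hkg
  haveI hI : FiniteDimensional K ↥(N ⊓ R) :=
    Submodule.finiteDimensional_of_le inf_le_left
  -- Step A : kernel
  have hres : ∀ x ∈ ker (g ∘ₗ f), f x ∈ N ⊓ R := by
    intro x hx
    exact ⟨by simpa [hN, LinearMap.mem_ker] using hx, mem_range_self f x⟩
  set ψ : ↥(ker (g ∘ₗ f)) →ₗ[K] ↥(N ⊓ R) := f.restrict hres with hψ
  have hψsurj : Function.Surjective ψ := by
    rintro ⟨v, hv⟩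
    obtain ⟨u, hu⟩ := hv.2
    have hu' : u ∈ ker (g ∘ₗ f) := by
      have : g v = 0 := hv.1
      simp [LinearMap.mem_ker, hu, this]
    exact ⟨⟨u, hu'⟩, Subtype.ext (by simpa [hψ] using hu)⟩
  have hψker : ker ψ = (ker f).comap (ker (g ∘ₗ f)).subtype :=
    LinearMap.ker_restrict hres
  have hlekf : ker f ≤ ker (g ∘ₗ f) := by
    intro x hx
    simp_all [LinearMap.mem_ker]
  have ekψ : ↥(ker ψ) ≃ₗ[K] ↥(ker f) :=
    (LinearEquiv.ofEq _ _ hψker).trans (Submodule.comapSubtypeEquivOfLe hlekf)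
  have eq1 : (↥(ker (g ∘ₗ f)) ⧸ ker ψ) ≃ₗ[K] ↥(N ⊓ R) :=
    LinearMap.quotKerEquivOfSurjective ψ hψsurj
  haveI hkgf : FiniteDimensional K (ker (g ∘ₗ f)) :=
    findim_ext (ker ψ) (ekψ.symm.finiteDimensional) (eq1.symm.finiteDimensional)
  have nA : finrank K (ker (g ∘ₗ f)) = finrank K (ker f) + finrank K ↥(N ⊓ R) := by
    have := Submodule.finrank_quotient_add_finrank (R := K) (M := ↥(ker (g ∘ₗ f))) (ker ψ)
    rw [eq1.finrank_eq, ekψ.finrank_eq] at this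
    omega
  -- Step B : cokernel
  set T' : Submodule K W := range g with hT'
  set S' : Submodule K W := range (g ∘ₗ f) with hS'
  have hST : S' ≤ T' := LinearMap.range_comp_le_range f g
  set χ : V →ₗ[K] (↥T' ⧸ (S'.comap T'.subtype)) :=
    (S'.comap T'.subtype).mkQ ∘ₗ (g.codRestrict T' (fun v => mem_range_self g v)) with hχ
  have hχsurj : Function.Surjective χ := by
    intro x
    obtain ⟨y, rfl⟩ := Submodule.mkQ_surjective _ x
    obtain ⟨v, hv⟩ := y.2
    exact ⟨v, by simp [hχ]; exact congrArg _ (Subtype.ext hv)⟩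
  have hχker : ker χ = N ⊔ R := by
    ext x
    simp only [hχ, LinearMap.mem_ker, LinearMap.comp_apply]
    rw [show ((S'.comap T'.subtype).mkQ) ((g.codRestrict T' _) x)
      = Submodule.Quotient.mk ((g.codRestrict T' (fun v => mem_range_self g v)) x) from rfl,
      Submodule.Quotient.mk_eq_zero]
    simp only [Submodule.mem_comap, LinearMap.codRestrict_apply, Submodule.coe_subtype]
    constructor
    · rintro ⟨u, hu⟩
      have hxu : x - f u ∈ N := by
        rw [hN, LinearMap.mem_ker, map_sub, ← LinearMap.comp_apply, hu, sub_self]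
      exact Submodule.mem_sup.mpr ⟨x - f u, hxu, f u, mem_range_self f u, by abel⟩
    · intro hx
      obtain ⟨y, hy, z, hz, rfl⟩ := Submodule.mem_sup.mp hx
      obtain ⟨u, rfl⟩ := hz
      have hy' : g y = 0 := hy
      exact ⟨u, by simp [map_add, hy']⟩
  have eqB : (V ⧸ (N ⊔ R)) ≃ₗ[K] (↥T' ⧸ (S'.comap T'.subtype)) :=
    (Submodule.quotEquivOfEq _ _ hχker.symm).trans
      (LinearMap.quotKerEquivOfSurjective χ hχsurj)
  haveI hVU : FiniteDimensional K (V ⧸ (N ⊔ R)) := by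
    have hsurj : Function.Surjective (Submodule.mapQ R (N ⊔ R) LinearMap.id
        (fun x hx => le_sup_right (a := N) hx)) := by
      intro x
      obtain ⟨y, rfl⟩ := Submodule.mkQ_surjective _ x
      exact ⟨Submodule.Quotient.mk y, rfl⟩
    exact FiniteDimensional.of_surjective _ hsurj
  haveI hcgf : FiniteDimensional K (W ⧸ range (g ∘ₗ f)) :=
    findim_quot_tower S' T' hST (eqB.finiteDimensional) hcg
  have nB : finrank K (W ⧸ S')
      = finrank K (V ⧸ (N ⊔ R)) + finrank K (W ⧸ T') := by
    have := finrank_quot_tower S' T' hST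
    rw [← eqB.finrank_eq] at this
    exact this
  -- Step C : second isomorphism theorem
  have nC : finrank K ↥N = finrank K ↥(N ⊓ R)
      + finrank K (↥(N ⊔ R) ⧸ (R.comap (N ⊔ R).subtype)) := by
    have h1 := Submodule.finrank_quotient_add_finrank (R := K) (M := ↥N)
      ((N ⊓ R).comap N.subtype)
    rw [((Submodule.quotEquivOfEq ((N ⊓ R).comap N.subtype) (N.comap N.subtype ⊓ R.comap N.subtype)
      (by rw [Submodule.comap_inf])).trans (LinearMap.quotientInfEquivSupQuotient N R)).finrank_eq,
      (Submodule.comapSubtypeEquivOfLe (inf_le_left : N ⊓ R ≤ N)).finrank_eq] at h1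
    omega
  -- Step D : quotient tower for R ≤ N ⊔ R
  have nD : finrank K (V ⧸ R) = finrank K (↥(N ⊔ R) ⧸ (R.comap (N ⊔ R).subtype))
      + finrank K (V ⧸ (N ⊔ R)) :=
    finrank_quot_tower R (N ⊔ R) le_sup_right
  refine ⟨hkgf, hcgf, ?_⟩
  omega
end Alg



section OpLemmas

variable {E F G : Type*} [NormedAddCommGroup E] [NormedSpace ℂ E]
  [NormedAddCommGroup F] [NormedSpace ℂ F] [NormedAddCommGroup G] [NormedSpace ℂ G]

/-- Transport of kernel/range along right composition with a linear equivalence. -/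
theorem comp_equiv_right (T : F →L[ℂ] G) (T' : E →L[ℂ] G) (e : E ≃ₗ[ℂ] F)
    (h : ∀ x, T' x = T (e x)) :
    Nonempty (↥(LinearMap.ker T'.toLinearMap) ≃ₗ[ℂ] ↥(LinearMap.ker T.toLinearMap)) ∧
      LinearMap.range T'.toLinearMap = LinearMap.range T.toLinearMap := by
  have hT' : (T' : E →ₗ[ℂ] G) = (T : F →ₗ[ℂ] G) ∘ₗ (e : E →ₗ[ℂ] F) := by
    ext x; exact h x
  have hker : LinearMap.ker T'.toLinearMap = (LinearMap.ker T.toLinearMap).map (e.symm : F →ₗ[ℂ] E) := by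
    show LinearMap.ker (T' : E →ₗ[ℂ] G) = _
    rw [hT', LinearMap.ker_comp, ← Submodule.comap_equiv_eq_map_symm]
  constructor
  · exact ⟨(LinearEquiv.ofEq _ _ hker).trans
      ((e.symm.submoduleMap (LinearMap.ker T.toLinearMap)).symm)⟩
  · show LinearMap.range (T' : E →ₗ[ℂ] G) = _
    rw [hT', LinearMap.range_comp, LinearEquiv.range, Submodule.map_top]

theorem opIndex_comp_equiv_right (T : F →L[ℂ] G) (T' : E →L[ℂ] G) (e : E ≃ₗ[ℂ] F)
    (h : ∀ x, T' x = T (e x)) : opIndex T' = opIndex T := by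
  obtain ⟨⟨keq⟩, hrange⟩ := comp_equiv_right T T' e h
  unfold opIndex
  rw [keq.finrank_eq, hrange]

/-- Transport of kernel/range along left composition with a linear equivalence. -/
theorem comp_equiv_left (T : E →L[ℂ] F) (T' : E →L[ℂ] G) (e : F ≃ₗ[ℂ] G)
    (h : ∀ x, T' x = e (T x)) :
    LinearMap.ker T'.toLinearMap = LinearMap.ker T.toLinearMap ∧
      Nonempty ((F ⧸ LinearMap.range T.toLinearMap) ≃ₗ[ℂ] (G ⧸ LinearMap.range T'.toLinearMap)) := by
  have hT' : (T' : E →ₗ[ℂ] G) = (e : F →ₗ[ℂ] G) ∘ₗ (T : E →ₗ[ℂ] F) := by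
    ext x; exact h x
  have hrange : (LinearMap.range T.toLinearMap).map (e : F →ₗ[ℂ] G) = LinearMap.range T'.toLinearMap := by
    show _ = LinearMap.range (T' : E →ₗ[ℂ] G)
    rw [hT', LinearMap.range_comp]
  constructor
  · show LinearMap.ker (T' : E →ₗ[ℂ] G) = LinearMap.ker (T : E →ₗ[ℂ] F)
    rw [hT', LinearMap.ker_comp]
    ext x
    simp
  · exact ⟨Submodule.Quotient.equiv _ _ e hrange⟩

theorem opIndex_comp_equiv_left (T : E →L[ℂ] F) (T' : E →L[ℂ] G) (e : F ≃ₗ[ℂ] G)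
    (h : ∀ x, T' x = e (T x)) : opIndex T' = opIndex T := by
  obtain ⟨hker, ⟨ceq⟩⟩ := comp_equiv_left T T' e h
  unfold opIndex
  rw [hker, ceq.finrank_eq]

theorem cpt_comp_left (C : F →L[ℂ] G) {A : E →L[ℂ] F} (h : IsCompactOperator ⇑A) :
    IsCompactOperator ⇑(C ∘L A) := by
  have := h.continuous_comp C.continuous
  exact this

theorem cpt_comp_right {A : E →L[ℂ] F} (h : IsCompactOperator ⇑A) (C : G →L[ℂ] E) :
    IsCompactOperator ⇑(A ∘L C) := by
  have := h.comp_clm C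
  exact this

theorem cpt_add {A B : E →L[ℂ] F} (hA : IsCompactOperator ⇑A)
    (hB : IsCompactOperator ⇑B) : IsCompactOperator ⇑(A + B) := by
  have := hA.add hB
  rwa [show ⇑(A + B) = ⇑A + ⇑B from rfl]

theorem cpt_neg {A : E →L[ℂ] F} (hA : IsCompactOperator ⇑A) :
    IsCompactOperator ⇑(-A) := by
  have := hA.neg
  rwa [show ⇑(-A) = -⇑A from rfl]

theorem coker_findim_mono {R R' : Submodule ℂ F} (h : R ≤ R')
    (hfd : FiniteDimensional ℂ (F ⧸ R)) : FiniteDimensional ℂ (F ⧸ R') := by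
  have hsurj : Function.Surjective (Submodule.mapQ R R' LinearMap.id h) := by
    intro x
    obtain ⟨y, rfl⟩ := Submodule.mkQ_surjective _ x
    exact ⟨Submodule.Quotient.mk y, rfl⟩
  exact FiniteDimensional.of_surjective _ hsurj

end OpLemmas

section Hilbert

variable {H : Type*} [NormedAddCommGroup H] [InnerProductSpace ℂ H] [CompleteSpace H]

theorem exists_finRank_approx (K : H →L[ℂ] H) (hK : IsCompactOperator ⇑K) :
    ∃ F : H →L[ℂ] H, FiniteDimensional ℂ ↥(LinearMap.range F.toLinearMap) ∧ ‖K - F‖ < 1 := by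
  have hcomp : IsCompact (closure (⇑K '' Metric.closedBall 0 1)) :=
    hK.isCompact_closure_image_closedBall (𝕜₁ := ℂ) (f := (K : H →ₗ[ℂ] H)) 1
  have htb : TotallyBounded (⇑K '' Metric.closedBall 0 1) :=
    hcomp.totallyBounded.subset subset_closure
  obtain ⟨t, htfin, hcover⟩ := Metric.totallyBounded_iff.mp htb (1/4) (by norm_num)
  set M : Submodule ℂ H := Submodule.span ℂ t with hM
  haveI : FiniteDimensional ℂ M := FiniteDimensional.span_of_finite ℂ htfin
  haveI : CompleteSpace M := FiniteDimensional.complete ℂ M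
  set Fop : H →L[ℂ] H := M.subtypeL ∘L (orthogonalProjection M) ∘L K with hFop
  have hb : ∀ x : H, ‖x‖ ≤ 1 → ‖(K - Fop) x‖ ≤ 1/4 := by
    intro x hx
    have hmem : K x ∈ ⇑K '' Metric.closedBall 0 1 :=
      ⟨x, by simpa [Metric.mem_closedBall] using hx, rfl⟩
    obtain ⟨y, hyt, hyd⟩ := by simpa using hcover hmem
    have hyM : y ∈ M := Submodule.subset_span hyt
    have h1 : ‖K x - orthogonalProjection M (K x)‖ ≤ ‖K x - y‖ := by
      show ‖K x - M.starProjection (K x)‖ ≤ _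
      rw [starProjection_minimal]
      refine ciInf_le ⟨0, ?_⟩ (⟨y, hyM⟩ : M)
      rintro r ⟨v, rfl⟩
      positivity
    have h2 : ‖K x - y‖ ≤ 1/4 := by
      rw [dist_eq_norm] at hyd
      linarith
    calc ‖(K - Fop) x‖ = ‖K x - orthogonalProjection M (K x)‖ := by
          simp [hFop]
      _ ≤ 1/4 := h1.trans h2
  have hb2 : ∀ x : H, ‖(K - Fop) x‖ ≤ (1/2) * ‖x‖ := by
    intro x
    rcases eq_or_ne x 0 with rfl | hx
    · simp
    · have hn : ‖x‖ > 0 := norm_pos_iff.mpr hx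
      have h1 : ‖(K - Fop) (‖x‖⁻¹ • x)‖ ≤ 1/4 := by
        refine hb _ ?_
        rw [norm_smul, norm_inv, norm_norm, inv_mul_cancel₀ hn.ne']
      rw [ContinuousLinearMap.map_smul_of_tower, norm_smul, norm_inv, norm_norm] at h1
      have := mul_le_mul_of_nonneg_left h1 hn.le
      rw [← mul_assoc, mul_inv_cancel₀ hn.ne', one_mul] at this
      nlinarith
  refine ⟨Fop, ?_, ?_⟩
  · have hle : LinearMap.range Fop.toLinearMap ≤ M := by
      rintro _ ⟨x, rfl⟩
      exact (orthogonalProjection M (K x)).2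
    exact Submodule.finiteDimensional_of_le hle
  · have := ContinuousLinearMap.opNorm_le_bound (K - Fop) (by norm_num) hb2
    linarith

theorem finRank_opIndex (F : H →L[ℂ] H) (hF : FiniteDimensional ℂ ↥(LinearMap.range F.toLinearMap)) :
    (FiniteDimensional ℂ ↥(LinearMap.ker (1 + F).toLinearMap) ∧
      FiniteDimensional ℂ (H ⧸ LinearMap.range (1 + F).toLinearMap)) ∧ opIndex (1 + F) = 0 := by
  have hkercl : IsClosed ((LinearMap.ker F.toLinearMap : Submodule ℂ H) : Set H) := ContinuousLinearMap.isClosed_ker F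
  haveI : CompleteSpace (LinearMap.ker F.toLinearMap) := hkercl.completeSpace_coe
  have e1 : (H ⧸ LinearMap.ker F.toLinearMap) ≃ₗ[ℂ] ↥(LinearMap.range F.toLinearMap) :=
    (F : H →ₗ[ℂ] H).quotKerEquivRange
  have e2 : (H ⧸ LinearMap.ker F.toLinearMap) ≃ₗ[ℂ] ↥((LinearMap.ker F.toLinearMap)ᗮ) :=
    Submodule.quotientEquivOfIsCompl _ _ Submodule.isCompl_orthogonal_of_hasOrthogonalProjection
  haveI hfo : FiniteDimensional ℂ ↥((LinearMap.ker F.toLinearMap)ᗮ) :=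
    (e1.symm.trans e2).finiteDimensional
  set M : Submodule ℂ H := LinearMap.range F.toLinearMap ⊔ (LinearMap.ker F.toLinearMap)ᗮ with hMdef
  haveI : FiniteDimensional ℂ M := Submodule.finiteDimensional_sup _ _
  haveI : CompleteSpace M := FiniteDimensional.complete ℂ M
  have hMF : ∀ x : H, F x ∈ M := fun x =>
    Submodule.mem_sup_left (LinearMap.mem_range_self (F : H →ₗ[ℂ] H) x)
  have hMorth : Mᗮ ≤ LinearMap.ker F.toLinearMap := by
    have h1 : (LinearMap.ker F.toLinearMap)ᗮ ≤ M := le_sup_right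
    have h2 : Mᗮ ≤ ((LinearMap.ker F.toLinearMap)ᗮ)ᗮ := Submodule.orthogonal_le h1
    rwa [Submodule.orthogonal_orthogonal] at h2
  set G : ↥M →ₗ[ℂ] ↥M :=
    LinearMap.id + ((F : H →ₗ[ℂ] H) ∘ₗ M.subtype).codRestrict M (fun x => hMF x) with hG
  have hGapply : ∀ m : ↥M, ((G m : H)) = (m : H) + F (m : H) := fun m => rfl
  have happly : ∀ x : H, (1 + F) x = x + F x := fun x => rfl
  -- kernel
  have hkerle : LinearMap.ker (1 + F).toLinearMap ≤ M := by
    intro x hx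
    have hx' : x + F x = 0 := hx
    have hxe : x = -(F x) := eq_neg_of_add_eq_zero_left hx'
    rw [hxe, ← map_neg]
    exact hMF _
  have hkerG : LinearMap.ker G = (LinearMap.ker (1 + F).toLinearMap).comap M.subtype := by
    ext m
    constructor
    · intro hm
      have h0 : (m : H) + F (m : H) = 0 := by
        rw [← hGapply m]
        exact congrArg Subtype.val hm
      exact h0
    · intro hm
      have hm' : (m : H) + F (m : H) = 0 := hm
      exact Subtype.ext (by rw [hGapply m]; exact hm')
  have keq : ↥(LinearMap.ker G) ≃ₗ[ℂ] ↥(LinearMap.ker (1 + F).toLinearMap) :=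
    (LinearEquiv.ofEq _ _ hkerG).trans (Submodule.comapSubtypeEquivOfLe hkerle)
  -- cokernel
  set φ : H →ₗ[ℂ] (↥M ⧸ LinearMap.range G) :=
    (LinearMap.range G).mkQ ∘ₗ (orthogonalProjection M : H →L[ℂ] ↥M).toLinearMap with hφ
  have hφsurj : Function.Surjective φ := by
    intro x
    obtain ⟨y, rfl⟩ := Submodule.mkQ_surjective _ x
    refine ⟨(y : H), ?_⟩
    simp only [hφ, LinearMap.comp_apply, ContinuousLinearMap.coe_coe]
    rw [orthogonalProjection_mem_subspace_eq_self y]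
  have hsubker : ∀ z : H, F (z - (orthogonalProjection M z : H)) = 0 := fun z =>
    hMorth (sub_starProjection_mem_orthogonal z)
  have hφker : LinearMap.ker φ = LinearMap.range (1 + F).toLinearMap := by
    ext x
    simp only [hφ, LinearMap.mem_ker, LinearMap.comp_apply, ContinuousLinearMap.coe_coe,
      LinearMap.mem_range]
    rw [show ((LinearMap.range G).mkQ) (orthogonalProjection M x)
      = Submodule.Quotient.mk (orthogonalProjection M x) from rfl,
      Submodule.Quotient.mk_eq_zero, LinearMap.mem_range]
    constructor
    · rintro ⟨m, hm⟩
      refine ⟨(x - (orthogonalProjection M x : H)) + (m : H), ?_⟩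
      have hcoe : (m : H) + F (m : H) = ((orthogonalProjection M x : H)) := by
        rw [← hGapply m, hm]
      rw [happly, map_add, hsubker x, zero_add, add_assoc, hcoe]
      abel
    · rintro ⟨z, rfl⟩
      refine ⟨orthogonalProjection M z, Subtype.ext ?_⟩
      have hFz : F z = F ((orthogonalProjection M z : H)) := by
        have h0 := hsubker z
        rw [map_sub, sub_eq_zero] at h0
        exact h0
      have hmem : ((orthogonalProjection M (F z) : H)) = F z :=
        starProjection_eq_self_iff.mpr (hMF z)
      rw [hGapply, happly, map_add, Submodule.coe_add, hmem, hFz]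
  have ceq : (H ⧸ LinearMap.range (1 + F).toLinearMap) ≃ₗ[ℂ] (↥M ⧸ LinearMap.range G) :=
    (Submodule.quotEquivOfEq _ _ hφker.symm).trans
      (LinearMap.quotKerEquivOfSurjective φ hφsurj)
  refine ⟨⟨keq.finiteDimensional, ceq.symm.finiteDimensional⟩, ?_⟩
  have r1 : finrank ℂ (↥M ⧸ LinearMap.range G) + finrank ℂ ↥(LinearMap.range G)
      = finrank ℂ ↥M := Submodule.finrank_quotient_add_finrank _
  have r2 : finrank ℂ ↥(LinearMap.range G) + finrank ℂ ↥(LinearMap.ker G)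
      = finrank ℂ ↥M := LinearMap.finrank_range_add_finrank_ker G
  unfold opIndex
  rw [← keq.finrank_eq, ceq.finrank_eq]
  omega

theorem compact_opIndex (K : H →L[ℂ] H) (hK : IsCompactOperator ⇑K) :
    (FiniteDimensional ℂ ↥(LinearMap.ker (1 + K).toLinearMap) ∧
      FiniteDimensional ℂ (H ⧸ LinearMap.range (1 + K).toLinearMap)) ∧ opIndex (1 + K) = 0 := by
  obtain ⟨F, hFfin, hnorm⟩ := exists_finRank_approx K hK
  have hu : ‖-(K - F)‖ < 1 := by rwa [norm_neg]
  set u : (H →L[ℂ] H)ˣ := Units.oneSub (-(K - F)) hu with hudef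
  have huval : u.val = 1 + (K - F) := by
    show 1 - -(K - F) = 1 + (K - F)
    rw [sub_neg_eq_add]
  set F' : H →L[ℂ] H := u.inv * F with hF'def
  have hF'fin : FiniteDimensional ℂ ↥(LinearMap.range F'.toLinearMap) := by
    have : LinearMap.range F'.toLinearMap = (LinearMap.range F.toLinearMap).map (u.inv : H →ₗ[ℂ] H) := by
      show LinearMap.range ((u.inv : H →ₗ[ℂ] H) ∘ₗ (F : H →ₗ[ℂ] H)) = _
      rw [LinearMap.range_comp]
    rw [this]
    haveI := hFfin
    infer_instance
  have hfact : 1 + K = u.val * (1 + F') := by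
    have h1 : u.val * (1 + F') = u.val + (u.val * u.inv) * F := by
      rw [mul_add, mul_one, hF'def, ← mul_assoc]
    rw [h1, u.val_inv, one_mul, huval]
    abel
  -- the unit as a linear equivalence
  have hcomp1 : ((u.val : H →L[ℂ] H) : H →ₗ[ℂ] H) ∘ₗ ((u.inv : H →L[ℂ] H) : H →ₗ[ℂ] H)
      = LinearMap.id := by
    ext x
    show (u.val * u.inv) x = x
    rw [u.val_inv]
    rfl
  have hcomp2 : ((u.inv : H →L[ℂ] H) : H →ₗ[ℂ] H) ∘ₗ ((u.val : H →L[ℂ] H) : H →ₗ[ℂ] H)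
      = LinearMap.id := by
    ext x
    show (u.inv * u.val) x = x
    rw [u.inv_val]
    rfl
  set e : H ≃ₗ[ℂ] H := LinearEquiv.ofLinear
    ((u.val : H →L[ℂ] H) : H →ₗ[ℂ] H) ((u.inv : H →L[ℂ] H) : H →ₗ[ℂ] H)
    hcomp1 hcomp2 with hedef
  have happ : ∀ x, (1 + K) x = e ((1 + F') x) := by
    intro x
    rw [hfact]
    rfl
  obtain ⟨⟨hk1, hc1⟩, hidx⟩ := finRank_opIndex F' hF'fin
  obtain ⟨hker, ⟨ceq⟩⟩ := comp_equiv_left (1 + F') (1 + K) e happ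
  refine ⟨⟨by rwa [hker], ceq.finiteDimensional⟩, ?_⟩
  rw [opIndex_comp_equiv_left (1 + F') (1 + K) e happ, hidx]

/-- `S` is a parametrix for `T` (two-sided inverse modulo compacts). -/
def IsPar (T S : H →L[ℂ] H) : Prop :=
  IsCompactOperator ⇑(S * T - 1) ∧ IsCompactOperator ⇑(T * S - 1)

theorem compact_opIndex' (A : H →L[ℂ] H) (h : IsCompactOperator ⇑(A - 1)) :
    (FiniteDimensional ℂ ↥(LinearMap.ker A.toLinearMap) ∧
      FiniteDimensional ℂ (H ⧸ LinearMap.range A.toLinearMap)) ∧ opIndex A = 0 := by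
  have : A = 1 + (A - 1) := by abel
  rw [this]
  exact compact_opIndex _ h

theorem IsPar.symm {T S : H →L[ℂ] H} (h : IsPar T S) : IsPar S T := ⟨h.2, h.1⟩

theorem IsPar.finIndex {T S : H →L[ℂ] H} (h : IsPar T S) :
    FiniteDimensional ℂ ↥(LinearMap.ker T.toLinearMap) ∧
      FiniteDimensional ℂ (H ⧸ LinearMap.range T.toLinearMap) := by
  constructor
  · have h1 := (compact_opIndex' (S * T) h.1).1.1
    have hle : LinearMap.ker T.toLinearMap ≤ LinearMap.ker (S * T).toLinearMap := by
      intro x hx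
      have hx' : T x = 0 := hx
      show S (T x) = 0
      rw [hx', map_zero]
    exact Submodule.finiteDimensional_of_le hle
  · have h1 := (compact_opIndex' (T * S) h.2).1.2
    have hle : LinearMap.range (T * S).toLinearMap ≤ LinearMap.range T.toLinearMap := by
      rintro x ⟨y, rfl⟩
      exact ⟨S y, rfl⟩
    exact coker_findim_mono hle h1

theorem opIndex_mul {f g : H →L[ℂ] H}
    (hkf : FiniteDimensional ℂ ↥(LinearMap.ker f.toLinearMap))
    (hcf : FiniteDimensional ℂ (H ⧸ LinearMap.range f.toLinearMap))
    (hkg : FiniteDimensional ℂ ↥(LinearMap.ker g.toLinearMap))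
    (hcg : FiniteDimensional ℂ (H ⧸ LinearMap.range g.toLinearMap)) :
    opIndex (g * f) = opIndex g + opIndex f :=
  (index_comp (f : H →ₗ[ℂ] H) (g : H →ₗ[ℂ] H) hkf hcf hkg hcg).2.2

theorem IsPar.opIndex_eq_neg {T S : H →L[ℂ] H} (h : IsPar T S) :
    opIndex T = - opIndex S := by
  have hT := h.finIndex
  have hS := h.symm.finIndex
  have hadd : opIndex (S * T) = opIndex S + opIndex T :=
    opIndex_mul hT.1 hT.2 hS.1 hS.2
  have h0 : opIndex (S * T) = 0 := (compact_opIndex' (S * T) h.1).2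
  omega

theorem IsPar.add_compact {T S K : H →L[ℂ] H} (h : IsPar T S)
    (hK : IsCompactOperator ⇑K) : IsPar (T + K) S := by
  constructor
  · have heq : S * (T + K) - 1 = (S * T - 1) + S * K := by noncomm_ring
    rw [heq]
    exact h.1.add (cpt_comp_left S hK)
  · have heq : (T + K) * S - 1 = (T * S - 1) + K * S := by noncomm_ring
    rw [heq]
    exact h.2.add (cpt_comp_right hK S)

theorem IsPar.opIndex_congr {T T' S : H →L[ℂ] H} (h : IsPar T S)
    (hK : IsCompactOperator ⇑(T' - T)) : opIndex T' = opIndex T ∧ IsPar T' S := by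
  have h2 : IsPar T' S := by
    have : T' = T + (T' - T) := by abel
    rw [this]
    exact h.add_compact hK
  refine ⟨?_, h2⟩
  rw [h2.opIndex_eq_neg, h.opIndex_eq_neg]

theorem IsPar.mul {T S T' S' : H →L[ℂ] H} (h : IsPar T S) (h' : IsPar T' S') :
    IsPar (T * T') (S' * S) := by
  constructor
  · have heq : (S' * S) * (T * T') - 1 = S' * (S * T - 1) * T' + (S' * T' - 1) := by
      noncomm_ring
    rw [heq]
    exact ((cpt_comp_right (cpt_comp_left S' h.1) T').add h'.1)
  · have heq : (T * T') * (S' * S) - 1 = T * (T' * S' - 1) * S + (T * S - 1) := by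
      noncomm_ring
    rw [heq]
    exact ((cpt_comp_right (cpt_comp_left T h'.2) S).add h.2)

theorem opIndex_one : opIndex (1 : H →L[ℂ] H) = 0 := by
  unfold opIndex
  have hker : LinearMap.ker (1 : H →L[ℂ] H).toLinearMap = ⊥ := by
    ext x; simp [LinearMap.mem_ker]
  have hrange : LinearMap.range (1 : H →L[ℂ] H).toLinearMap = ⊤ := by
    ext x; simp only [LinearMap.mem_range, Submodule.mem_top, iff_true]; exact ⟨x, rfl⟩
  rw [hker, hrange]
  have : Subsingleton (H ⧸ (⊤ : Submodule ℂ H)) :=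
    Submodule.Quotient.subsingleton_iff.mpr rfl
  rw [finrank_bot, finrank_zero_of_subsingleton]
  simp

/-- Index of `1 - P + PQP` equals the index of the compression `PQ|_{ran P}`. -/
theorem opIndex_corner (Pc Q : H →L[ℂ] H) (hPP : Pc * Pc = Pc) :
    opIndex (1 - Pc + Pc * Q * Pc)
      = opIndex (((Pc.comp (Q.comp (LinearMap.range Pc.toLinearMap).subtypeL)).codRestrict
          (LinearMap.range Pc.toLinearMap) (fun x => LinearMap.mem_range_self (Pc : H →ₗ[ℂ] H) _))) := by
  have hPapp : ∀ x, Pc (Pc x) = Pc x := by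
    intro x
    conv_lhs => rw [← ContinuousLinearMap.mul_apply, hPP]
  have hPmem : ∀ x ∈ LinearMap.range Pc.toLinearMap, Pc x = x := by
    rintro x ⟨y, rfl⟩
    exact hPapp y
  set rp : Submodule ℂ H := LinearMap.range Pc.toLinearMap with hrp
  set A : ↥rp →L[ℂ] ↥rp := ((Pc.comp (Q.comp rp.subtypeL)).codRestrict
    rp (fun x => LinearMap.mem_range_self (Pc : H →ₗ[ℂ] H) _)) with hA
  have hAapp : ∀ m : ↥rp, ((A m : H)) = Pc (Q (m : H)) := fun m => rfl
  set B : H →L[ℂ] H := 1 - Pc + Pc * Q * Pc with hB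
  have hBapp : ∀ x, B x = x - Pc x + Pc (Q (Pc x)) := fun x => rfl
  -- kernel
  have hkB : LinearMap.ker B.toLinearMap = (LinearMap.ker A.toLinearMap).map rp.subtype := by
    ext x
    constructor
    · intro hx
      have hx' : x - Pc x + Pc (Q (Pc x)) = 0 := hx
      have h1 : Pc (Q (Pc x)) = 0 := by
        have h2 := congrArg Pc hx'
        rwa [map_add, map_sub, hPapp, sub_self, zero_add, hPapp, map_zero] at h2
      have h2 : x = Pc x := by
        rw [h1, add_zero, sub_eq_zero] at hx'
        exact hx'
      have hmem : x ∈ rp := ⟨x, h2.symm⟩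
      refine ⟨⟨x, hmem⟩, ?_, rfl⟩
      have h3 : Pc (Q x) = 0 := by rwa [← h2] at h1
      exact Subtype.ext (by exact (hAapp _).trans h3)
    · rintro ⟨⟨y, hy⟩, hk, rfl⟩
      have hk' : Pc (Q y) = 0 := congrArg Subtype.val hk
      show y - Pc y + Pc (Q (Pc y)) = 0
      rw [hPmem y hy, hk', sub_self, zero_add]
  -- cokernel
  set φ : H →ₗ[ℂ] (↥rp ⧸ LinearMap.range A.toLinearMap) :=
    (LinearMap.range A.toLinearMap).mkQ ∘ₗ ((Pc : H →ₗ[ℂ] H).codRestrict rp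
      (fun x => LinearMap.mem_range_self _ x)) with hφ
  have hφsurj : Function.Surjective φ := by
    intro x
    obtain ⟨y, rfl⟩ := Submodule.mkQ_surjective _ x
    refine ⟨(y : H), ?_⟩
    show Submodule.Quotient.mk _ = Submodule.Quotient.mk y
    exact congrArg _ (Subtype.ext (hPmem _ y.2))
  have hφker : LinearMap.ker φ = LinearMap.range B.toLinearMap := by
    ext x
    rw [LinearMap.mem_ker, LinearMap.mem_range]
    rw [show φ x = Submodule.Quotient.mk ((Pc : H →ₗ[ℂ] H).codRestrict rp
      (fun x => LinearMap.mem_range_self _ x) x) from rfl, Submodule.Quotient.mk_eq_zero,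
      LinearMap.mem_range]
    constructor
    · rintro ⟨m, hm⟩
      have hm' : Pc (Q (m : H)) = Pc x := congrArg Subtype.val hm
      refine ⟨x - Pc x + (m : H), ?_⟩
      have hPz : Pc (x - Pc x + (m : H)) = (m : H) := by
        rw [map_add, map_sub, hPapp, sub_self, zero_add, hPmem _ m.2]
      show B (x - Pc x + (m : H)) = x
      rw [hBapp, hPz, hm']
      abel
    · rintro ⟨z, rfl⟩
      refine ⟨⟨Pc z, LinearMap.mem_range_self (Pc : H →ₗ[ℂ] H) _⟩, Subtype.ext ?_⟩
      show Pc (Q (Pc z)) = Pc (B z)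
      rw [hBapp, map_add, map_sub, hPapp, sub_self, zero_add, hPapp]
  have ceq : (H ⧸ LinearMap.range B.toLinearMap) ≃ₗ[ℂ] (↥rp ⧸ LinearMap.range A.toLinearMap) :=
    (Submodule.quotEquivOfEq _ _ hφker.symm).trans
      (LinearMap.quotKerEquivOfSurjective φ hφsurj)
  unfold opIndex
  rw [ceq.finrank_eq, hkB, Submodule.finrank_map_subtype_eq]

theorem cpt_sum {ι : Type*} (s : Finset ι) (f : ι → (H →L[ℂ] H))
    (h : ∀ i ∈ s, IsCompactOperator ⇑(f i)) : IsCompactOperator ⇑(∑ i ∈ s, f i) := by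
  classical
  induction s using Finset.induction with
  | empty => simpa using isCompactOperator_zero
  | @insert a t hk ih =>
    rw [Finset.sum_insert hk]
    have h1 := h _ (Finset.mem_insert_self _ _)
    have h2 := ih (fun i hi => h i (Finset.mem_insert_of_mem hi))
    have heq : ⇑(f a + ∑ x ∈ t, f x) = ⇑(f a) + ⇑(∑ x ∈ t, f x) := rfl
    rw [heq]
    exact h1.add h2

end Hilbert



/-- for a Fredholm fan, ind(∑ᵢ ΨᵢPᵢ) = ∑ᵢ ind(PᵢΨᵢ|_{Hᵢ} : Hᵢ → Hᵢ)
= ∑ᵢ ind(Pᵢ|_{Lᵢ} : Lᵢ → Hᵢ). -/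
theorem stmt14 {H : Type*} [NormedAddCommGroup H] [InnerProductSpace ℂ H] [CompleteSpace H]
    (n : ℕ) (P : Fin n → (H →L[ℂ] H)) (Ψ : Fin n → (H ≃L[ℂ] H))
    (hsum : ∑ i, P i = 1)
    (horth : ∀ i j, P i ∘L P j = if i = j then P i else 0)
    (hcomm : ∀ i j, IsCompactOperator
      (((Ψ i : H →L[ℂ] H) ∘L P j - P j ∘L (Ψ i : H →L[ℂ] H) : H →L[ℂ] H)))
    (L : Fin n → Submodule ℂ H)
    (hL : ∀ i, L i = (LinearMap.range (P i : H →ₗ[ℂ] H)).map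
      (((Ψ i : H →L[ℂ] H)) : H →ₗ[ℂ] H)) :
    opIndex (∑ i, (Ψ i : H →L[ℂ] H) ∘L P i) =
        ∑ i, opIndex (((P i).comp ((Ψ i : H →L[ℂ] H).comp
          (LinearMap.range (P i : H →ₗ[ℂ] H)).subtypeL)).codRestrict (LinearMap.range (P i : H →ₗ[ℂ] H))
          (fun x => LinearMap.mem_range_self (P i : H →ₗ[ℂ] H)
            ((Ψ i : H →L[ℂ] H) ((LinearMap.range (P i : H →ₗ[ℂ] H)).subtypeL x)))) ∧
      opIndex (∑ i, (Ψ i : H →L[ℂ] H) ∘L P i) =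
        ∑ i, opIndex (((P i).comp (L i).subtypeL).codRestrict (LinearMap.range (P i : H →ₗ[ℂ] H))
          (fun x => LinearMap.mem_range_self (P i : H →ₗ[ℂ] H) ((L i).subtypeL x))) := by
  classical
  set Ψc : Fin n → (H →L[ℂ] H) := fun i => (Ψ i : H →L[ℂ] H) with hΨc
  set Ψinv : Fin n → (H →L[ℂ] H) := fun i => ((Ψ i).symm : H →L[ℂ] H) with hΨinv
  have hQQ' : ∀ i, Ψc i * Ψinv i = 1 := by
    intro i; ext x; exact (Ψ i).apply_symm_apply x
  have hQ'Q : ∀ i, Ψinv i * Ψc i = 1 := by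
    intro i; ext x; exact (Ψ i).symm_apply_apply x
  have hPmul : ∀ i j, P i * P j = if i = j then P i else 0 := fun i j => horth i j
  have hPP : ∀ i, P i * P i = P i := fun i => by
    have := hPmul i i; rwa [if_pos rfl] at this
  have hP0 : ∀ i j, i ≠ j → P i * P j = 0 := fun i j hij => by
    have := hPmul i j; rwa [if_neg hij] at this
  have hcm : ∀ i j, IsCompactOperator ⇑(Ψc i * P j - P j * Ψc i) := fun i j => hcomm i j
  have hD : ∀ i j, IsCompactOperator ⇑(P j * Ψc i - Ψc i * P j) := fun i j => by
    have heq : P j * Ψc i - Ψc i * P j = -(Ψc i * P j - P j * Ψc i) := by abel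
    rw [heq]; exact cpt_neg (hcm i j)
  have hcinv : ∀ i j, IsCompactOperator ⇑(Ψinv i * P j - P j * Ψinv i) := fun i j => by
    have key : Ψinv i * ((P j * Ψc i - Ψc i * P j) * Ψinv i)
        = (Ψinv i * P j) * (Ψc i * Ψinv i) - (Ψinv i * Ψc i) * (P j * Ψinv i) := by
      noncomm_ring
    rw [hQQ' i, hQ'Q i, mul_one, one_mul] at key
    rw [← key]
    exact cpt_comp_left _ (cpt_comp_right (hD i j) _)
  have hDinv : ∀ i j, IsCompactOperator ⇑(P j * Ψinv i - Ψinv i * P j) := fun i j => by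
    have heq : P j * Ψinv i - Ψinv i * P j = -(Ψinv i * P j - P j * Ψinv i) := by abel
    rw [heq]; exact cpt_neg (hcinv i j)
  set Tk : Fin n → (H →L[ℂ] H) := fun k => 1 - P k + Ψc k * P k with hTk
  set Sk : Fin n → (H →L[ℂ] H) := fun k => 1 - P k + Ψinv k * P k with hSk
  -- each Tk has a parametrix
  have hParT : ∀ k, IsPar (Tk k) (Sk k) := by
    intro k
    constructor
    · have hexp : Sk k * Tk k = (1 - P k) * (1 - P k) + (1 - P k) * (Ψc k * P k)
          + ((Ψinv k * P k) * (1 - P k) + (Ψinv k * P k) * (Ψc k * P k)) := by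
        show (1 - P k + Ψinv k * P k) * (1 - P k + Ψc k * P k) = _
        noncomm_ring
      have e1 : (1 - P k) * (1 - P k) = 1 - P k := by
        have h9 : (1 - P k) * (1 - P k) = 1 - P k - P k + P k * P k := by noncomm_ring
        rw [h9, hPP k]; abel
      have e2 : (1 - P k) * (Ψc k * P k)
          = (Ψc k * P k - P k * Ψc k) * P k + Ψc k * (P k - P k * P k) := by noncomm_ring
      have e2' : (1 - P k) * (Ψc k * P k) = (Ψc k * P k - P k * Ψc k) * P k := by
        rw [e2, hPP k, sub_self, mul_zero, add_zero]
      have e3 : (Ψinv k * P k) * (1 - P k) = Ψinv k * (P k - P k * P k) := by noncomm_ring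
      have e3' : (Ψinv k * P k) * (1 - P k) = 0 := by
        rw [e3, hPP k, sub_self, mul_zero]
      have e4 : (Ψinv k * P k) * (Ψc k * P k)
          = Ψinv k * ((P k * Ψc k - Ψc k * P k) * P k) + (Ψinv k * Ψc k) * (P k * P k) := by
        noncomm_ring
      have e4' : (Ψinv k * P k) * (Ψc k * P k)
          = Ψinv k * ((P k * Ψc k - Ψc k * P k) * P k) + P k := by
        rw [e4, hQ'Q k, hPP k, one_mul]
      have hfin : Sk k * Tk k - 1 = (Ψc k * P k - P k * Ψc k) * P k
          + Ψinv k * ((P k * Ψc k - Ψc k * P k) * P k) := by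
        rw [hexp, e1, e2', e3', e4']; abel
      rw [hfin]
      exact cpt_add (cpt_comp_right (hcm k k) _)
        (cpt_comp_left _ (cpt_comp_right (hD k k) _))
    · have hexp : Tk k * Sk k = (1 - P k) * (1 - P k) + (1 - P k) * (Ψinv k * P k)
          + ((Ψc k * P k) * (1 - P k) + (Ψc k * P k) * (Ψinv k * P k)) := by
        show (1 - P k + Ψc k * P k) * (1 - P k + Ψinv k * P k) = _
        noncomm_ring
      have e1 : (1 - P k) * (1 - P k) = 1 - P k := by
        have h9 : (1 - P k) * (1 - P k) = 1 - P k - P k + P k * P k := by noncomm_ring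
        rw [h9, hPP k]; abel
      have e2 : (1 - P k) * (Ψinv k * P k)
          = (Ψinv k * P k - P k * Ψinv k) * P k + Ψinv k * (P k - P k * P k) := by noncomm_ring
      have e2' : (1 - P k) * (Ψinv k * P k) = (Ψinv k * P k - P k * Ψinv k) * P k := by
        rw [e2, hPP k, sub_self, mul_zero, add_zero]
      have e3 : (Ψc k * P k) * (1 - P k) = Ψc k * (P k - P k * P k) := by noncomm_ring
      have e3' : (Ψc k * P k) * (1 - P k) = 0 := by
        rw [e3, hPP k, sub_self, mul_zero]
      have e4 : (Ψc k * P k) * (Ψinv k * P k)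
          = Ψc k * ((P k * Ψinv k - Ψinv k * P k) * P k) + (Ψc k * Ψinv k) * (P k * P k) := by
        noncomm_ring
      have e4' : (Ψc k * P k) * (Ψinv k * P k)
          = Ψc k * ((P k * Ψinv k - Ψinv k * P k) * P k) + P k := by
        rw [e4, hQQ' k, hPP k, one_mul]
      have hfin : Tk k * Sk k - 1 = (Ψinv k * P k - P k * Ψinv k) * P k
          + Ψc k * ((P k * Ψinv k - Ψinv k * P k) * P k) := by
        rw [hexp, e1, e2', e3', e4']; abel
      rw [hfin]
      exact cpt_add (cpt_comp_right (hcinv k k) _)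
        (cpt_comp_left _ (cpt_comp_right (hDinv k k) _))
  -- index of Tk equals the index of the statement's compression operator
  have hTindex : ∀ k, opIndex (Tk k) = opIndex (((P k).comp ((Ψ k : H →L[ℂ] H).comp
      (LinearMap.range (P k).toLinearMap).subtypeL)).codRestrict (LinearMap.range (P k).toLinearMap)
      (fun x => LinearMap.mem_range_self (P k : H →ₗ[ℂ] H) _)) := by
    intro k
    have hTB : Tk k - (1 - P k + P k * Ψc k * P k)
        = (Ψc k * P k - P k * Ψc k) * P k + Ψc k * (P k - P k * P k) := by
      show 1 - P k + Ψc k * P k - (1 - P k + P k * Ψc k * P k) = _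
      noncomm_ring
    have hTB' : IsCompactOperator ⇑((1 - P k + P k * Ψc k * P k) - Tk k) := by
      have heq : (1 - P k + P k * Ψc k * P k) - Tk k
          = -(Tk k - (1 - P k + P k * Ψc k * P k)) := by abel
      rw [heq, hTB, hPP k, sub_self, mul_zero, add_zero]
      exact cpt_neg (cpt_comp_right (hcm k k) _)
    have h1 := ((hParT k).opIndex_congr hTB').1
    rw [← h1]
    exact opIndex_corner (P k) (Ψc k) (hPP k)
  -- the fan operators
  set Cc : Finset (Fin n) → (H →L[ℂ] H) :=
    fun s => (∑ i ∈ s, Ψc i * P i) + ∑ i ∈ sᶜ, P i with hCc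
  have hCP : ∀ (s : Finset (Fin n)) (k : Fin n), k ∉ s → Cc s * P k = P k := by
    intro s k hk
    rw [hCc]
    show ((∑ i ∈ s, Ψc i * P i) + ∑ i ∈ sᶜ, P i) * P k = P k
    rw [add_mul, Finset.sum_mul, Finset.sum_mul]
    have e1 : ∀ i ∈ s, (Ψc i * P i) * P k = 0 := by
      intro i hi
      have hik : i ≠ k := fun h => hk (h ▸ hi)
      rw [mul_assoc, hP0 i k hik, mul_zero]
    have e2 : ∀ i ∈ sᶜ, P i * P k = if i = k then P i else 0 := fun i _ => hPmul i k
    rw [Finset.sum_congr rfl e1, Finset.sum_congr rfl e2, Finset.sum_const_zero, zero_add,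
      Finset.sum_ite_eq' sᶜ k P, if_pos (Finset.mem_compl.mpr hk)]
  have hins : ∀ (s : Finset (Fin n)) (k : Fin n), k ∉ s →
      Cc (insert k s) = Cc s - P k + Ψc k * P k := by
    intro s k hk
    have hsplit := Finset.add_sum_erase sᶜ P (Finset.mem_compl.mpr hk)
    rw [hCc]
    show (∑ i ∈ insert k s, Ψc i * P i) + ∑ i ∈ (insert k s)ᶜ, P i
      = ((∑ i ∈ s, Ψc i * P i) + ∑ i ∈ sᶜ, P i) - P k + Ψc k * P k
    rw [Finset.sum_insert hk, Finset.compl_insert, ← hsplit]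
    abel
  have hstep : ∀ (s : Finset (Fin n)) (k : Fin n), k ∉ s →
      IsCompactOperator ⇑(Cc s * Tk k - Cc (insert k s)) := by
    intro s k hk
    have hTexp : Cc s * Tk k = Cc s - Cc s * P k + Cc s * (Ψc k * P k) := by
      show Cc s * (1 - P k + Ψc k * P k) = _
      noncomm_ring
    have hX : Cc s * Tk k - Cc (insert k s) = Cc s * (Ψc k * P k) - Ψc k * P k := by
      rw [hins s k hk, hTexp, hCP s k hk]
      abel
    rw [hX]
    have hsum_split : Cc s * (Ψc k * P k) - Ψc k * P k
        = (∑ i ∈ s, (Ψc i * P i) * (Ψc k * P k))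
          + ((∑ i ∈ sᶜ.erase k, P i * (Ψc k * P k)) + (P k * (Ψc k * P k) - Ψc k * P k)) := by
      rw [show Cc s = (∑ i ∈ s, Ψc i * P i) + ∑ i ∈ sᶜ, P i from rfl]
      rw [add_mul, Finset.sum_mul, Finset.sum_mul,
        ← Finset.add_sum_erase sᶜ (fun i => P i * (Ψc k * P k)) (Finset.mem_compl.mpr hk)]
      abel
    rw [hsum_split]
    have hc1 : IsCompactOperator ⇑(∑ i ∈ s, (Ψc i * P i) * (Ψc k * P k)) := by
      refine cpt_sum _ _ (fun i hi => ?_)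
      have hik : i ≠ k := fun h => hk (h ▸ hi)
      have heq : (Ψc i * P i) * (Ψc k * P k)
          = Ψc i * ((P i * Ψc k - Ψc k * P i) * P k) + Ψc i * (Ψc k * (P i * P k)) := by
        noncomm_ring
      rw [heq, hP0 i k hik, mul_zero, mul_zero, add_zero]
      exact cpt_comp_left _ (cpt_comp_right (hD k i) _)
    have hc2 : IsCompactOperator ⇑(∑ i ∈ sᶜ.erase k, P i * (Ψc k * P k)) := by
      refine cpt_sum _ _ (fun i hi => ?_)
      have hik : i ≠ k := (Finset.mem_erase.mp hi).1
      have heq : P i * (Ψc k * P k)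
          = (P i * Ψc k - Ψc k * P i) * P k + Ψc k * (P i * P k) := by noncomm_ring
      rw [heq, hP0 i k hik, mul_zero, add_zero]
      exact cpt_comp_right (hD k i) _
    have hc3 : IsCompactOperator ⇑(P k * (Ψc k * P k) - Ψc k * P k) := by
      have heq : P k * (Ψc k * P k) - Ψc k * P k
          = (P k * Ψc k - Ψc k * P k) * P k + (Ψc k * (P k * P k) - Ψc k * P k) := by
        noncomm_ring
      rw [heq, hPP k, sub_self, add_zero]
      exact cpt_comp_right (hD k k) _
    exact cpt_add hc1 (cpt_add hc2 hc3)
  -- the key induction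
  have key : ∀ s : Finset (Fin n), (∃ S', IsPar (Cc s) S') ∧
      opIndex (Cc s) = ∑ i ∈ s, opIndex (((P i).comp ((Ψ i : H →L[ℂ] H).comp
        (LinearMap.range (P i).toLinearMap).subtypeL)).codRestrict (LinearMap.range (P i).toLinearMap)
        (fun x => LinearMap.mem_range_self (P i : H →ₗ[ℂ] H) _)) := by
    intro s
    induction s using Finset.induction with
    | empty =>
      have hCempty : Cc ∅ = 1 := by
        rw [hCc]
        show (∑ i ∈ (∅ : Finset (Fin n)), Ψc i * P i) + ∑ i ∈ (∅ : Finset (Fin n))ᶜ, P i = 1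
        rw [Finset.sum_empty, Finset.compl_empty, zero_add]
        exact hsum
      constructor
      · refine ⟨1, ?_, ?_⟩ <;>
        · rw [hCempty]
          have h0 : (1 : H →L[ℂ] H) * 1 - 1 = 0 := by noncomm_ring
          rw [h0]
          exact isCompactOperator_zero
      · rw [hCempty, Finset.sum_empty, opIndex_one]
    | @insert k s hk ih =>
      obtain ⟨⟨S', hS'⟩, hidx⟩ := ih
      have hparmul : IsPar (Cc s * Tk k) (Sk k * S') := hS'.mul (hParT k)
      have hdiff : IsCompactOperator ⇑(Cc (insert k s) - Cc s * Tk k) := by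
        have h0 := hstep s k hk
        have heq : Cc (insert k s) - Cc s * Tk k = -(Cc s * Tk k - Cc (insert k s)) := by abel
        rw [heq]
        exact cpt_neg h0
      obtain ⟨hie, hpar'⟩ := hparmul.opIndex_congr hdiff
      refine ⟨⟨Sk k * S', hpar'⟩, ?_⟩
      have hfinC := hS'.finIndex
      have hfinT := (hParT k).finIndex
      have hmul_idx : opIndex (Cc s * Tk k) = opIndex (Cc s) + opIndex (Tk k) :=
        opIndex_mul hfinT.1 hfinT.2 hfinC.1 hfinC.2
      rw [hie, hmul_idx, hidx, hTindex k, Finset.sum_insert hk]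
      ring
  -- conclusion
  have hCuniv : (∑ i, (Ψ i : H →L[ℂ] H) ∘L P i) = Cc Finset.univ := by
    rw [hCc]
    show _ = (∑ i ∈ Finset.univ, Ψc i * P i) + ∑ i ∈ (Finset.univ : Finset (Fin n))ᶜ, P i
    rw [Finset.compl_univ, Finset.sum_empty, add_zero]
    exact Finset.sum_congr rfl (fun i _ => rfl)
  have hmain := (key Finset.univ).2
  constructor
  · rw [hCuniv]
    exact hmain
  · rw [hCuniv, hmain]
    refine Finset.sum_congr rfl (fun i _ => ?_)
    have hmapeq : (LinearMap.range (P i).toLinearMap).map ((Ψ i).toLinearEquiv : H →ₗ[ℂ] H) = L i := by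
      rw [hL i]
      rfl
    refine opIndex_comp_equiv_right _ _
      (((Ψ i).toLinearEquiv.submoduleMap (LinearMap.range (P i).toLinearMap)).trans
        (LinearEquiv.ofEq _ _ hmapeq)) (fun x => ?_)
    exact Subtype.ext rfl
end
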